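/- arXiv:2005.05475 — 4 statements merged into one kernel-verified Lean document; each statement's English description precedes it below -/
import Mathlib

section
/- Let 𝒱¹₄ := {2r : r odd positive integer and A(2r) = 4}. Then |𝒱¹₄(x)| / √x → 0 as x → ∞. -/
open Filter Topology
open scoped Classical

noncomputable section

/-- The multiplicity `A(m)`: the number of positive integers `n` with `φ(n) = m`. -/
def totA (m : ℕ) : ℕ := Set.ncard {n : ℕ | 0 < n ∧ n.totient = m}

/-- The set of totients `𝒱`. -/
def totV : Set ℕ := {m : ℕ | ∃ n : ℕ, 0 < n ∧ n.totient = m}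

/-- The stratum `𝒱^ℓ` of totients congruent to `2^ℓ` mod `2^(ℓ+1)`. -/
def totVl (ℓ : ℕ) : Set ℕ := {m ∈ totV | m % 2 ^ (ℓ + 1) = 2 ^ ℓ}

/-- `U(x)`: the number of elements of `U` not exceeding `x`. -/
def countUpTo (U : Set ℕ) (x : ℝ) : ℕ := Set.ncard {n ∈ U | (n : ℝ) ≤ x}

/-- `π(x)`: the number of primes not exceeding `x`. -/
def primePi (x : ℝ) : ℕ := Set.ncard {p : ℕ | p.Prime ∧ (p : ℝ) ≤ x}

/-- `S^ℓ(x) = Σ_{m ∈ 𝒱^ℓ, m ≤ x} A(m)`. -/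
def totS (ℓ : ℕ) (x : ℝ) : ℕ :=
  ∑ m ∈ Finset.range (⌊x⌋₊ + 1), if m ∈ totVl ℓ then totA m else 0

end

lemma totient_prod_primes (P : Finset ℕ) (h : ∀ p ∈ P, p.Prime) :
    (∏ p ∈ P, p).totient = ∏ p ∈ P, (p - 1) := by
  classical
  induction P using Finset.induction_on with
  | empty => simp
  | insert a s ha ih =>
    have hap : a.Prime := h a (Finset.mem_insert_self a s)
    have hs : ∀ p ∈ s, p.Prime := fun p hp => h p (Finset.mem_insert_of_mem hp)
    have hcop : a.Coprime (∏ p ∈ s, p) := by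
      apply Nat.Coprime.prod_right
      intro p hp
      exact (Nat.coprime_primes hap (hs p hp)).mpr (fun he => ha (he ▸ hp))
    rw [Finset.prod_insert ha, Finset.prod_insert ha, Nat.totient_mul hcop, ih hs,
      Nat.totient_prime hap]

lemma tot_small : ∀ ε : ℝ, 0 < ε → ∃ a : ℕ, 0 < a ∧ (a.totient : ℝ) < ε * a := by
  intro ε hε
  have hns : ¬ Summable ({p : ℕ | p.Prime}.indicator fun n => 1 / (n : ℝ)) :=
    not_summable_one_div_on_primes
  have hnn : ∀ n, 0 ≤ ({p : ℕ | p.Prime}.indicator fun n => 1 / (n : ℝ)) n := by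
    intro n
    apply Set.indicator_nonneg
    intro x _; positivity
  have htt := (summable_iff_not_tendsto_nat_atTop_of_nonneg hnn).not_left.mp hns

  obtain ⟨N, hN⟩ := (htt.eventually_ge_atTop (1 - Real.log ε)).exists
  set P : Finset ℕ := (Finset.range N).filter Nat.Prime with hP
  have hsum : ∑ i ∈ Finset.range N, ({p : ℕ | p.Prime}.indicator fun n => 1 / (n : ℝ)) i
      = ∑ p ∈ P, 1 / (p : ℝ) := by
    rw [hP, Finset.sum_filter]
    apply Finset.sum_congr rfl
    intro i _
    by_cases h : i.Prime <;> simp [Set.indicator, h]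
  rw [hsum] at hN
  refine ⟨∏ p ∈ P, p, Finset.prod_pos (fun p hp => ((Finset.mem_filter.mp hp).2).pos), ?_⟩
  have hprime : ∀ p ∈ P, p.Prime := fun p hp => (Finset.mem_filter.mp hp).2
  have htot : ((∏ p ∈ P, p).totient : ℝ) = ∏ p ∈ P, ((p : ℝ) - 1) := by
    rw [totient_prod_primes P hprime]
    push_cast
    refine Finset.prod_congr rfl fun p hp => ?_
    push_cast [Nat.cast_sub (hprime p hp).one_le]
    ring
  rw [htot]
  have hcast : ((∏ p ∈ P, p : ℕ) : ℝ) = ∏ p ∈ P, (p : ℝ) := by push_cast; ring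
  rw [hcast]
  calc ∏ p ∈ P, ((p : ℝ) - 1) ≤ ∏ p ∈ P, (Real.exp (-(1/(p:ℝ))) * p) := by
        apply Finset.prod_le_prod
        · intro p hp
          have := (hprime p hp).one_lt
          have : (1:ℝ) < p := by exact_mod_cast this
          linarith
        · intro p hp
          have hp1 : (0:ℝ) < p := by exact_mod_cast (hprime p hp).pos
          have h1 : 1 - 1/(p:ℝ) ≤ Real.exp (-(1/(p:ℝ))) := by
            have := Real.add_one_le_exp (-(1/(p:ℝ)))
            linarith
          have h2 : ((p:ℝ) - 1) = (1 - 1/(p:ℝ)) * p := by field_simp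
          rw [h2]
          exact mul_le_mul_of_nonneg_right h1 hp1.le
    _ = Real.exp (-∑ p ∈ P, 1/(p:ℝ)) * ∏ p ∈ P, (p:ℝ) := by
        rw [Finset.prod_mul_distrib, ← Real.exp_sum, Finset.sum_neg_distrib]
    _ < ε * ∏ p ∈ P, (p:ℝ) := by
        apply mul_lt_mul_of_pos_right
        · rw [← Real.exp_log hε, Real.exp_lt_exp]
          linarith
        · exact Finset.prod_pos fun p hp => by exact_mod_cast (hprime p hp).pos

lemma pi'_linear (a : ℕ) (ha : 0 < a) (m : ℕ) :
    (Nat.primeCounting' m : ℝ) ≤ ((a+1).primeCounting' + a.totient : ℕ) + ((a.totient : ℝ) / a) * m := by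
  have ha' : (0:ℝ) < a := by exact_mod_cast ha
  have htnn : (0:ℝ) ≤ (a.totient : ℝ) := by positivity
  have hnn : (0:ℝ) ≤ ((a.totient : ℝ)/a) * m := by positivity
  rcases le_or_gt m (a+1) with h | h
  · have h1 : (Nat.primeCounting' m : ℝ) ≤ ((a+1).primeCounting' : ℝ) := by
      exact_mod_cast Nat.monotone_primeCounting' h
    push_cast
    linarith
  · obtain ⟨n, rfl⟩ := Nat.exists_eq_add_of_lt h
    have key := Nat.primeCounting'_add_le ha.ne' (Nat.lt_succ_self a) (n+1)
    have key' : ((a + 1 + n + 1).primeCounting' : ℝ) ≤ ((a+1).primeCounting' : ℝ) + (a.totient : ℝ) * ((((n+1)/a : ℕ)) + 1) := by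
      exact_mod_cast key
    have hd : (((n+1)/a : ℕ) : ℝ) ≤ ((n+1 : ℕ) : ℝ)/a := Nat.cast_div_le
    have t1 : (a.totient : ℝ) * (((n+1)/a : ℕ) : ℝ) ≤ (a.totient : ℝ)/a * ((n+1:ℕ):ℝ) := by
      rw [div_mul_eq_mul_div, mul_div_assoc]
      exact mul_le_mul_of_nonneg_left hd htnn
    have t2 : ((n+1:ℕ):ℝ) ≤ ((a + 1 + n + 1 : ℕ):ℝ) := by push_cast; linarith
    have t3 : (a.totient : ℝ)/a * ((n+1:ℕ):ℝ) ≤ (a.totient : ℝ)/a * ((a + 1 + n + 1 : ℕ):ℝ) :=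
      mul_le_mul_of_nonneg_left t2 (by positivity)
    push_cast at key' ⊢
    push_cast at t1 t3
    linarith

lemma primePi_le (a : ℕ) (ha : 0 < a) (y : ℝ) (hy : 0 ≤ y) :
    (primePi y : ℝ) ≤ ((a+1).primeCounting' + a.totient : ℕ) + ((a.totient : ℝ) / a) * (y + 1) := by
  have h1 : primePi y ≤ (⌊y⌋₊ + 1).primeCounting' := by
    rw [primePi, ← Nat.primesBelow_card_eq_primeCounting']
    rw [← Set.ncard_coe_finset]
    apply Set.ncard_le_ncard _ (Finset.finite_toSet _)
    intro p hp
    simp only [Set.mem_setOf_eq] at hp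
    simp only [Finset.coe_sort_coe, Finset.mem_coe, Nat.mem_primesBelow]
    exact ⟨Nat.lt_succ_of_le (Nat.le_floor hp.2), hp.1⟩
  have h2 := pi'_linear a ha (⌊y⌋₊ + 1)
  have h3 : ((⌊y⌋₊ + 1 : ℕ) : ℝ) ≤ y + 1 := by
    push_cast
    have := Nat.floor_le hy
    linarith
  have h4 : ((a.totient : ℝ)/a) * ((⌊y⌋₊ + 1 : ℕ) : ℝ) ≤ ((a.totient : ℝ)/a) * (y+1) :=
    mul_le_mul_of_nonneg_left h3 (by positivity)
  have h5 : (primePi y : ℝ) ≤ ((⌊y⌋₊ + 1).primeCounting' : ℝ) := by exact_mod_cast h1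
  linarith


lemma primePi_div_tendsto : Tendsto (fun y : ℝ => (primePi y : ℝ) / y) atTop (nhds 0) := by
  rw [Metric.tendsto_atTop]
  intro ε hε
  obtain ⟨a, ha, hat⟩ := tot_small (ε/2) (by linarith)
  have ha' : (0:ℝ) < a := by exact_mod_cast ha
  have hfrac : (a.totient : ℝ)/a < ε/2 := (div_lt_iff₀ ha').mpr (by linarith)
  have hfnn : 0 ≤ (a.totient : ℝ)/a := by positivity
  set C : ℝ := (((a+1).primeCounting' + a.totient : ℕ) : ℝ) with hC
  have hCnn : (0:ℝ) ≤ C := by positivity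
  refine ⟨max 1 ((C + ε/2 + 1) / (ε/2) + 1), fun y hy => ?_⟩
  have hy1 : 1 ≤ y := le_trans (le_max_left _ _) hy
  have hy2 : (C + ε/2 + 1) / (ε/2) + 1 ≤ y := le_trans (le_max_right _ _) hy
  have hy0 : 0 < y := by linarith
  have hb := primePi_le a ha y (by linarith)
  rw [Real.dist_eq, sub_zero]
  have hnum : (primePi y : ℝ) ≤ C + ε/2 + (ε/2) * y := by
    have : ((a.totient : ℝ)/a) * (y+1) ≤ (ε/2) * (y + 1) := by
      apply mul_le_mul_of_nonneg_right hfrac.le; linarith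
    rw [← hC] at hb
    nlinarith
  have habs : |(primePi y : ℝ)/y| = (primePi y : ℝ)/y := abs_of_nonneg (by positivity)
  rw [habs, div_lt_iff₀ hy0]
  have : (C + ε/2 + 1) ≤ (ε/2) * (y - 1) := by
    calc C + ε/2 + 1 = (C + ε/2 + 1)/(ε/2) * (ε/2) := by field_simp
    _ ≤ (y-1) * (ε/2) := by apply mul_le_mul_of_nonneg_right _ (by linarith); linarith
    _ = (ε/2) * (y-1) := mul_comm _ _
  nlinarith

lemma struct (r : ℕ) (hr : 0 < r) (hodd : Odd r) (hA : totA (2*r) = 4) :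
    ∃ q b : ℕ, q.Prime ∧ 2 ≤ b ∧ 2*r = q^(b-1) * (q-1) := by
  by_contra hno
  push_neg at hno
  have h4 : ¬ (4 ∣ 2*r) := by
    rintro ⟨k, hk⟩
    obtain ⟨j, hj⟩ := hodd
    omega
  have hsub : {n : ℕ | 0 < n ∧ n.totient = 2*r} ⊆ {2*r+1, 2*(2*r+1)} := by
    rintro n ⟨hn, hphi⟩
    have hn0 : n ≠ 0 := hn.ne'
    have hdvd4 : ∀ m, m ∣ n → ¬ (4 ∣ m.totient) := by
      intro m hm hd
      exact h4 (hphi ▸ hd.trans (Nat.totient_dvd_of_dvd hm))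
    set e := n.factorization 2 with he
    set t := n / 2^e with htdef
    have hproj : 2^e * t = n := Nat.ordProj_mul_ordCompl_eq_self n 2
    have ht0 : t ≠ 0 := (Nat.ordCompl_pos 2 hn0).ne'
    have htodd : ¬ 2 ∣ t := Nat.not_dvd_ordCompl Nat.prime_two hn0
    have he2 : e ≤ 2 := by
      by_contra hgt
      push_neg at hgt
      have h8 : (8 : ℕ) ∣ n := by
        calc (8:ℕ) = 2^3 := by norm_num
        _ ∣ 2^e := pow_dvd_pow 2 hgt
        _ ∣ n := Nat.ordProj_dvd n 2
      have := hdvd4 8 h8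
      rw [show Nat.totient 8 = 4 by decide] at this
      exact this dvd_rfl
    by_cases ht1 : t = 1
    · have hne : n = 2^e := by rw [← hproj, ht1, mul_one]
      rw [hne] at hphi
      have he0 : e = 0 ∨ e = 1 ∨ e = 2 := by omega
      rcases he0 with h | h | h <;> rw [h] at hphi
      · rw [pow_zero, Nat.totient_one] at hphi; omega
      · rw [pow_one, show Nat.totient 2 = 1 by decide] at hphi; omega
      · rw [show (2:ℕ)^2 = 4 by norm_num, show Nat.totient 4 = 2 by decide] at hphi
        exact absurd (by omega : 2*r = 2^(2-1)*(2-1)) (hno 2 2 Nat.prime_two le_rfl)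
    · set p := t.minFac with hpdef
      have hp : p.Prime := Nat.minFac_prime ht1
      have hpt : p ∣ t := Nat.minFac_dvd t
      have hptn : p ∣ n := hpt.trans (Dvd.intro_left _ hproj)
      have hpodd : p ≠ 2 := fun h => htodd (h ▸ hpt)
      have hp2 := hp.two_le
      have hp1even : 2 ∣ p - 1 := by
        obtain ⟨j, hj⟩ := hp.odd_of_ne_two hpodd
        omega
      have huniq : ∀ {q : ℕ}, q.Prime → q ∣ t → q = p := by
        intro q hq hqt
        by_contra hne
        have hqodd : q ≠ 2 := fun h => htodd (h ▸ hqt)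
        have hq2 := hq.two_le
        have hq1even : 2 ∣ q - 1 := by
          obtain ⟨j, hj⟩ := hq.odd_of_ne_two hqodd
          omega
        have hcop : Nat.Coprime q p := (Nat.coprime_primes hq hp).mpr hne
        have hqp : q * p ∣ n :=
          hcop.mul_dvd_of_dvd_of_dvd (hqt.trans (Dvd.intro_left _ hproj)) hptn
        apply hdvd4 (q*p) hqp
        rw [Nat.totient_mul hcop, Nat.totient_prime hq, Nat.totient_prime hp]
        obtain ⟨j, hj⟩ := hq1even
        obtain ⟨k, hk⟩ := hp1even
        rw [hj, hk]
        exact ⟨j*k, by ring⟩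
      have ht : t = p ^ t.primeFactorsList.length := Nat.eq_prime_pow_of_unique_prime_dvd ht0 huniq
      set a := t.primeFactorsList.length with hadef
      have ha1 : 1 ≤ a := by
        rcases Nat.eq_zero_or_pos a with h | h
        · rw [h, pow_zero] at ht; exact absurd ht ht1
        · exact h
      have he1 : e ≤ 1 := by
        by_contra hgt
        push_neg at hgt
        have h4n : (4:ℕ) ∣ n := by
          calc (4:ℕ) = 2^2 := by norm_num
          _ ∣ 2^e := pow_dvd_pow 2 hgt
          _ ∣ n := Nat.ordProj_dvd n 2
        have hcop : Nat.Coprime 4 p := by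
          have h2 : Nat.Coprime p 2 := (Nat.coprime_primes hp Nat.prime_two).mpr hpodd
          have h3 := (h2.pow_right 2).symm
          exact (by norm_num : (2:ℕ)^2 = 4) ▸ h3
        have h4p : 4 * p ∣ n := hcop.mul_dvd_of_dvd_of_dvd h4n hptn
        apply hdvd4 (4*p) h4p
        rw [Nat.totient_mul hcop, show Nat.totient 4 = 2 by decide, Nat.totient_prime hp]
        obtain ⟨k, hk⟩ := hp1even
        rw [hk]
        exact ⟨k, by ring⟩
      have hcop2 : Nat.Coprime (2^e) t := by
        apply Nat.Coprime.pow_left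
        rw [Nat.coprime_two_left, Nat.odd_iff]
        omega
      have hphit : t.totient = 2*r := by
        rw [← hproj, Nat.totient_mul hcop2] at hphi
        have h1 : (2^e).totient = 1 := by
          rcases (by omega : e = 0 ∨ e = 1) with h | h <;> rw [h]
          · rw [pow_zero, Nat.totient_one]
          · rw [pow_one]; decide
        rw [h1, one_mul] at hphi
        exact hphi
      have hpow : t.totient = p^(a-1)*(p-1) := by
        conv_lhs => rw [ht]
        exact Nat.totient_prime_pow hp ha1
      rcases eq_or_lt_of_le ha1 with h1 | h2
      · have ha : a = 1 := h1.symm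
        rw [ha] at hpow
        simp only [Nat.sub_self, pow_zero, one_mul] at hpow
        have hpval : p = 2*r + 1 := by omega
        have hnval : n = 2^e * t := hproj.symm
        rw [ht, ha, pow_one, hpval] at hnval
        rcases (by omega : e = 0 ∨ e = 1) with h | h <;> rw [h] at hnval
        · left; rw [hnval]; norm_num
        · right; rw [hnval]; norm_num
      · exact absurd (hphit ▸ hpow : 2*r = p^(a-1)*(p-1)) (hno p a hp h2)
  have hfin : ({2*r+1, 2*(2*r+1)} : Set ℕ).Finite := (Set.finite_singleton _).insert _
  have hle : totA (2*r) ≤ ({2*r+1, 2*(2*r+1)} : Set ℕ).ncard := Set.ncard_le_ncard hsub hfin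
  have h2' : ({2*r+1, 2*(2*r+1)} : Set ℕ).ncard ≤ 2 :=
    le_trans (Set.ncard_insert_le _ _) (by simp)
  omega

lemma primes_finite (y : ℝ) (hy : 0 ≤ y) : {p : ℕ | p.Prime ∧ (p : ℝ) ≤ y}.Finite := by
  apply (Set.finite_Iic ⌊y⌋₊).subset
  intro p hp
  exact Set.mem_Iic.mpr (Nat.le_floor hp.2)

lemma count_bound (x : ℝ) (hx : 0 ≤ x) :
    countUpTo {m : ℕ | ∃ r : ℕ, 0 < r ∧ Odd r ∧ totA (2 * r) = 4 ∧ m = 2 * r} x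
      ≤ primePi (Real.sqrt x + 1)
        + (⌊(2*x) ^ ((3:ℝ)⁻¹)⌋₊ + 1) * (⌊Real.logb 2 x⌋₊ + 2) := by
  classical
  set Q := ⌊(2*x) ^ ((3:ℝ)⁻¹)⌋₊ with hQ
  set B := ⌊Real.logb 2 x⌋₊ + 1 with hB
  set P : Set ℕ := {p : ℕ | p.Prime ∧ (p : ℝ) ≤ Real.sqrt x + 1} with hP
  have hPfin : P.Finite := primes_finite _ (by positivity)
  set T2 : Set ℕ := (fun q => q * (q-1)) '' P with hT2
  set F3 : Finset (ℕ × ℕ) := (Finset.range (Q+1)) ×ˢ (Finset.range (B+1)) with hF3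
  set T3 : Set ℕ := (fun qb : ℕ × ℕ => qb.1 ^ (qb.2 - 1) * (qb.1 - 1)) '' ↑F3 with hT3
  have hsub : {n ∈ {m : ℕ | ∃ r : ℕ, 0 < r ∧ Odd r ∧ totA (2 * r) = 4 ∧ m = 2 * r} | (n : ℝ) ≤ x}
      ⊆ T2 ∪ T3 := by
    rintro m ⟨⟨r, hr, hodd, hA, rfl⟩, hmx⟩
    obtain ⟨q, b, hq, hb, heq⟩ := struct r hr hodd hA
    have hq2 : 2 ≤ q := hq.two_le
    have hq2R : (2:ℝ) ≤ q := by exact_mod_cast hq2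
    have hmR : ((q:ℝ) ^ (b-1) * ((q:ℝ) - 1)) ≤ x := by
      have : ((2*r : ℕ) : ℝ) ≤ x := hmx
      rw [heq] at this
      push_cast [Nat.cast_sub hq.one_le] at this
      exact this
    rcases eq_or_lt_of_le hb with hb2 | hb3
    · -- b = 2
      left
      refine ⟨q, ⟨hq, ?_⟩, ?_⟩
      · have h1 : ((q:ℝ) - 1)^2 ≤ x := by
          have hb1 : b - 1 = 1 := by omega
          rw [hb1, pow_one] at hmR
          nlinarith
        have h2 : (q:ℝ) - 1 ≤ Real.sqrt x :=
          (Real.le_sqrt' (by linarith)).mpr h1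
        linarith
      · rw [heq, show b - 1 = 1 by omega, pow_one]
    · -- 3 ≤ b
      right
      have hb3' : 3 ≤ b := hb3
      have hq1R : (1:ℝ) ≤ (q:ℝ) - 1 := by linarith
      have hpowmono : (q:ℝ)^2 ≤ (q:ℝ)^(b-1) := by
        apply pow_le_pow_right₀ (by linarith)
        omega
      have hq3 : (q:ℝ)^3 ≤ 2*x := by
        have h1 : (q:ℝ)^2 * ((q:ℝ) - 1) ≤ x := by nlinarith
        nlinarith [pow_pos (by linarith : (0:ℝ) < q) 2]
      have hqQ : q ≤ Q := by
        apply Nat.le_floor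
        set c := (2*x) ^ ((3:ℝ)⁻¹) with hc
        have hc0 : 0 ≤ c := Real.rpow_nonneg (by linarith) _
        have hc3 : c ^ (3:ℕ) = 2*x := by
          rw [hc, ← Real.rpow_natCast ((2*x) ^ ((3:ℝ)⁻¹)) 3, ← Real.rpow_mul (by linarith)]
          norm_num
        apply le_of_pow_le_pow_left₀ (by norm_num : (3:ℕ) ≠ 0) hc0
        rw [hc3]
        exact hq3
      have hbB : b ≤ B := by
        have h2b : (2:ℝ)^((b-1:ℕ):ℝ) ≤ x := by
          rw [Real.rpow_natCast]
          calc (2:ℝ)^(b-1) ≤ (q:ℝ)^(b-1) := pow_le_pow_left₀ (by norm_num) hq2R _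
          _ ≤ (q:ℝ)^(b-1) * ((q:ℝ)-1) := le_mul_of_one_le_right (by positivity) hq1R
          _ ≤ x := hmR
        have hx1 : (0:ℝ) < x := by
          have : (0:ℝ) < (2:ℝ)^((b-1:ℕ):ℝ) := Real.rpow_pos_of_pos (by norm_num) _
          linarith
        have : ((b-1:ℕ):ℝ) ≤ Real.logb 2 x :=
          (Real.le_logb_iff_rpow_le (by norm_num) hx1).mpr h2b
        have := Nat.le_floor this
        omega
      refine ⟨(q, b), ?_, ?_⟩
      · simp only [hF3, Finset.coe_product, Set.mem_prod, Finset.mem_coe, Finset.mem_range]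
        exact ⟨by omega, by omega⟩
      · exact heq.symm
  have hT2fin : T2.Finite := hPfin.image _
  have hT3fin : T3.Finite := (F3.finite_toSet.image _)
  calc countUpTo _ x ≤ (T2 ∪ T3).ncard := Set.ncard_le_ncard hsub (hT2fin.union hT3fin)
    _ ≤ T2.ncard + T3.ncard := Set.ncard_union_le _ _
    _ ≤ primePi (Real.sqrt x + 1) + (Q+1) * (B+1) := by
        gcongr
        · exact le_trans (Set.ncard_image_le hPfin) (le_of_eq rfl)
        · calc T3.ncard ≤ (↑F3 : Set (ℕ×ℕ)).ncard := Set.ncard_image_le F3.finite_toSet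
            _ = F3.card := Set.ncard_coe_finset _
            _ = (Q+1) * (B+1) := by rw [hF3, Finset.card_product]; simp
    _ = primePi (Real.sqrt x + 1) + (⌊(2*x) ^ ((3:ℝ)⁻¹)⌋₊ + 1) * (⌊Real.logb 2 x⌋₊ + 2) := by
        rw [hQ, hB]

lemma sqrt_tendsto_atTop : Tendsto Real.sqrt atTop atTop := by
  rw [tendsto_atTop_atTop]
  intro C
  refine ⟨(max C 0)^2, fun x hx => le_trans (le_max_left C 0) ?_⟩
  rw [← Real.sqrt_sq (le_max_right C 0)]
  exact Real.sqrt_le_sqrt hx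

lemma part1 : Tendsto (fun x : ℝ => (primePi (Real.sqrt x + 1) : ℝ) / Real.sqrt x) atTop (nhds 0) := by
  have hcomp : Tendsto (fun x : ℝ => Real.sqrt x + 1) atTop atTop :=
    tendsto_atTop_add_const_right _ 1 sqrt_tendsto_atTop
  have h1 : Tendsto (fun x : ℝ => (primePi (Real.sqrt x + 1) : ℝ) / (Real.sqrt x + 1)) atTop (nhds 0) :=
    primePi_div_tendsto.comp hcomp
  have h2 : Tendsto (fun x : ℝ => (Real.sqrt x + 1) / Real.sqrt x) atTop (nhds 1) := by
    have h3 : Tendsto (fun x : ℝ => 1 + (Real.sqrt x)⁻¹) atTop (nhds (1 + 0)) :=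
      tendsto_const_nhds.add (tendsto_inv_atTop_zero.comp sqrt_tendsto_atTop)
    rw [add_zero] at h3
    apply h3.congr'
    filter_upwards [eventually_ge_atTop (1:ℝ)] with x hx
    have hs : (0:ℝ) < Real.sqrt x := Real.sqrt_pos.mpr (by linarith)
    field_simp
  have := h1.mul h2
  rw [zero_mul] at this
  apply this.congr'
  filter_upwards [eventually_ge_atTop (1:ℝ)] with x hx
  have hs : (0:ℝ) < Real.sqrt x := Real.sqrt_pos.mpr (by linarith)
  field_simp

lemma part2 : Tendsto (fun x : ℝ =>
    (((⌊(2*x) ^ ((3:ℝ)⁻¹)⌋₊ + 1) * (⌊Real.logb 2 x⌋₊ + 2) : ℕ) : ℝ) / Real.sqrt x) atTop (nhds 0) := by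
  have hlim : Tendsto (fun x : ℝ => 108 * x ^ (-(1/12 : ℝ))) atTop (nhds 0) := by
    have := (tendsto_rpow_neg_atTop (by norm_num : (0:ℝ) < 1/12)).const_mul (108:ℝ)
    rwa [mul_zero] at this
  apply squeeze_zero' (g := fun x : ℝ => 108 * x ^ (-(1/12 : ℝ)))
  · filter_upwards [eventually_ge_atTop (1:ℝ)] with x hx
    positivity
  · filter_upwards [eventually_ge_atTop (1:ℝ)] with x hx
    have hx0 : (0:ℝ) < x := by linarith
    have h112 : (1:ℝ) ≤ x ^ ((12:ℝ)⁻¹) := Real.one_le_rpow hx (by norm_num)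
    have h13 : (1:ℝ) ≤ x ^ ((3:ℝ)⁻¹) := Real.one_le_rpow hx (by norm_num)
    -- numerator bound
    have hA : ((⌊(2*x) ^ ((3:ℝ)⁻¹)⌋₊ : ℕ) : ℝ) + 1 ≤ 4 * x ^ ((3:ℝ)⁻¹) := by
      have hfl : ((⌊(2*x) ^ ((3:ℝ)⁻¹)⌋₊ : ℕ) : ℝ) ≤ (2*x) ^ ((3:ℝ)⁻¹) :=
        Nat.floor_le (Real.rpow_nonneg (by linarith) _)
      have hmul : (2*x) ^ ((3:ℝ)⁻¹) = 2 ^ ((3:ℝ)⁻¹) * x ^ ((3:ℝ)⁻¹) :=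
        Real.mul_rpow (by norm_num) (by linarith)
      have h2third : (2:ℝ) ^ ((3:ℝ)⁻¹) ≤ 2 := by
        calc (2:ℝ) ^ ((3:ℝ)⁻¹) ≤ 2 ^ (1:ℝ) :=
          Real.rpow_le_rpow_of_exponent_le (by norm_num) (by norm_num)
        _ = 2 := Real.rpow_one 2
      have : (2*x) ^ ((3:ℝ)⁻¹) ≤ 2 * x ^ ((3:ℝ)⁻¹) := by
        rw [hmul]
        apply mul_le_mul_of_nonneg_right h2third (by positivity)
      linarith
    have hB : ((⌊Real.logb 2 x⌋₊ : ℕ) : ℝ) + 2 ≤ 27 * x ^ ((12:ℝ)⁻¹) := by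
      have hlb0 : 0 ≤ Real.logb 2 x := Real.logb_nonneg (by norm_num) hx
      have hfl : ((⌊Real.logb 2 x⌋₊ : ℕ) : ℝ) ≤ Real.logb 2 x := Nat.floor_le hlb0
      have hlog : Real.log x ≤ 12 * x ^ ((12:ℝ)⁻¹) := by
        have h1 : Real.log x = 12 * Real.log (x ^ ((12:ℝ)⁻¹)) := by
          rw [Real.log_rpow hx0]; ring
        have h2 : Real.log (x ^ ((12:ℝ)⁻¹)) ≤ x ^ ((12:ℝ)⁻¹) := by
          have := Real.log_le_sub_one_of_pos (x := x ^ ((12:ℝ)⁻¹)) (by positivity)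
          linarith
        rw [h1]; linarith
      have hlogb : Real.logb 2 x ≤ 2 * Real.log x := by
        rw [Real.logb, div_le_iff₀ (Real.log_pos (by norm_num))]
        nlinarith [Real.log_two_gt_d9, Real.log_nonneg hx]
      nlinarith
    have hsqrt : Real.sqrt x = x ^ ((2:ℝ)⁻¹) := by rw [Real.sqrt_eq_rpow]; norm_num
    have hnum : (((⌊(2*x) ^ ((3:ℝ)⁻¹)⌋₊ + 1) * (⌊Real.logb 2 x⌋₊ + 2) : ℕ) : ℝ)
        ≤ 108 * x ^ ((3:ℝ)⁻¹) * x ^ ((12:ℝ)⁻¹) := by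
      push_cast
      have hA' : (0:ℝ) ≤ ((⌊(2*x) ^ ((3:ℝ)⁻¹)⌋₊ : ℕ) : ℝ) + 1 := by positivity
      nlinarith [(by positivity : (0:ℝ) ≤ ((⌊Real.logb 2 x⌋₊ : ℕ) : ℝ)),
        (by positivity : (0:ℝ) ≤ ((⌊(2*x) ^ ((3:ℝ)⁻¹)⌋₊ : ℕ) : ℝ)),
        Real.rpow_nonneg hx0.le ((3:ℝ)⁻¹), Real.rpow_nonneg hx0.le ((12:ℝ)⁻¹)]
    rw [hsqrt, div_le_iff₀ (by positivity)]
    calc (((⌊(2*x) ^ ((3:ℝ)⁻¹)⌋₊ + 1) * (⌊Real.logb 2 x⌋₊ + 2) : ℕ) : ℝ)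
        ≤ 108 * x ^ ((3:ℝ)⁻¹) * x ^ ((12:ℝ)⁻¹) := hnum
      _ = 108 * x ^ (-(1/12:ℝ)) * x ^ ((2:ℝ)⁻¹) := by
          rw [mul_assoc, mul_assoc, ← Real.rpow_add hx0, ← Real.rpow_add hx0]
          norm_num
  · exact hlim

/-- With `𝒱¹₄ = {2r : r odd positive, A(2r) = 4}`, one has `|𝒱¹₄(x)|/√x → 0`. -/
theorem stmt_2 :
    Tendsto
      (fun x : ℝ =>
        (countUpTo {m : ℕ | ∃ r : ℕ, 0 < r ∧ Odd r ∧ totA (2 * r) = 4 ∧ m = 2 * r} x : ℝ)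
          / Real.sqrt x)
      atTop (nhds 0) := by
  have hsum := part1.add part2
  rw [add_zero] at hsum
  apply squeeze_zero' ?_ ?_ hsum
  · filter_upwards [eventually_ge_atTop (1:ℝ)] with x hx
    positivity
  · filter_upwards [eventually_ge_atTop (1:ℝ)] with x hx
    have hs : (0:ℝ) < Real.sqrt x := Real.sqrt_pos.mpr (by linarith)
    have hcb := count_bound x (by linarith)
    rw [← add_div]
    gcongr
    exact_mod_cast hcb
end

section
/- If there exists a positive integer ℓ₀ such that the set of multiplicities {A(m) : m ∈ 𝒱^{ℓ₀}} is unbounded, then for every integer n ≥ 0 the set of multiplicities {A(m) : m ∈ 𝒱^{ℓ₀+n}} is unbounded. -/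
open Filter Topology
open scoped Classical

/-- Any `n` with `φ(n) = m > 0` satisfies `n ≤ 2m²`. -/
lemma totient_fiber_bound {m n : ℕ} (hn : n.totient = m) (hm : 0 < m) : n ≤ 2 * m * m := by
  have hn0 : n ≠ 0 := by rintro rfl; simp [Nat.totient_zero] at hn; omega
  set P := ∏ p ∈ n.primeFactors, p with hP
  set Q := ∏ p ∈ n.primeFactors, (p - 1) with hQ
  have hQpos : 0 < Q := Finset.prod_pos (fun p hp => by
    have := (Nat.prime_of_mem_primeFactors hp).two_le; omega)
  have hQm : Q ≤ m := by
    rw [← hn, Nat.totient_eq_prod_factorization hn0, Finsupp.prod, Nat.support_factorization]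
    exact Finset.prod_le_prod (fun p hp => Nat.zero_le _) (fun p hp => by
      have h1 : 1 ≤ p ^ (n.factorization p - 1) :=
        Nat.one_le_pow _ _ (Nat.pos_of_mem_primeFactors hp)
      calc p - 1 = 1 * (p - 1) := (one_mul _).symm
      _ ≤ p ^ (n.factorization p - 1) * (p - 1) := Nat.mul_le_mul_right _ h1)
  have hpow : (∏ _p ∈ n.primeFactors, 2) ≤ 2 * Q := by
    by_cases h2 : 2 ∈ n.primeFactors
    · rw [hQ, ← Finset.prod_erase_mul _ _ h2, ← Finset.prod_erase_mul _ _ h2]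
      simp only [show (2:ℕ) - 1 = 1 from rfl, mul_one]
      rw [mul_comm]
      exact Nat.mul_le_mul_left 2 (Finset.prod_le_prod (fun _ _ => Nat.zero_le _)
        (fun p hp => by
          have hp2 := (Nat.prime_of_mem_primeFactors (Finset.mem_of_mem_erase hp)).two_le
          have hne := Finset.ne_of_mem_erase hp
          omega))
    · calc (∏ _p ∈ n.primeFactors, 2) ≤ Q :=
            Finset.prod_le_prod (fun _ _ => Nat.zero_le _) (fun p hp => by
              have hne : p ≠ 2 := fun h => h2 (h ▸ hp)
              have h2le := (Nat.prime_of_mem_primeFactors hp).two_le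
              omega)
      _ ≤ 2 * Q := Nat.le_mul_of_pos_left _ (by norm_num)
  have hPQ : P ≤ (∏ _p ∈ n.primeFactors, 2) * Q := by
    rw [hP, hQ, ← Finset.prod_mul_distrib]
    exact Finset.prod_le_prod (fun _ _ => Nat.zero_le _) (fun p hp => by
      have := (Nat.prime_of_mem_primeFactors hp).two_le; omega)
  have key : m * P = n * Q := by rw [← hn]; exact Nat.totient_mul_prod_primeFactors n
  have : n * Q ≤ 2 * m * m * Q := by
    calc n * Q = m * P := key.symm
    _ ≤ m * ((∏ _p ∈ n.primeFactors, 2) * Q) := Nat.mul_le_mul_left _ hPQ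
    _ ≤ m * (2 * Q * Q) := Nat.mul_le_mul_left _ (Nat.mul_le_mul_right _ hpow)
    _ ≤ m * (2 * m * Q) :=
        Nat.mul_le_mul_left _ (Nat.mul_le_mul_right _ (Nat.mul_le_mul_left _ hQm))
    _ = 2 * m * m * Q := by ring
  exact Nat.le_of_mul_le_mul_right this hQpos

lemma totient_fiber_finite {m : ℕ} (hm : 0 < m) :
    {n : ℕ | 0 < n ∧ n.totient = m}.Finite :=
  Set.Finite.subset (Set.finite_Icc 0 (2*m*m))
    (fun n hn => Set.mem_Icc.mpr ⟨Nat.zero_le _, totient_fiber_bound hn.2 hm⟩)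

lemma totA_le_two_mul {m : ℕ} (hm : 0 < m) : totA m ≤ 2 * totA (2 * m) := by
  classical
  set S := {n : ℕ | 0 < n ∧ n.totient = m} with hS
  set T := {n : ℕ | 0 < n ∧ n.totient = 2 * m} with hT
  set O := {n ∈ S | Odd n} with hO
  set E := {n ∈ S | Even n} with hE
  have hTfin : T.Finite := totient_fiber_finite (by omega)
  have hEfin : E.Finite := (totient_fiber_finite hm).subset (fun n hn => hn.1)
  have hinj : Set.InjOn (fun n => 2 * n) Set.univ := fun a _ b _ h => by simpa using h
  have hOE : O.ncard ≤ E.ncard := by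
    refine Set.ncard_le_ncard_of_injOn (fun n => 2 * n) ?_ (hinj.mono (Set.subset_univ _)) hEfin
    rintro n ⟨⟨hn0, hnφ⟩, hodd⟩
    refine ⟨⟨(by omega : 0 < 2*n), ?_⟩, by exact even_two_mul n⟩
    rw [Nat.totient_mul (Nat.coprime_two_left.mpr hodd), Nat.totient_two, one_mul, hnφ]
  have hET : E.ncard ≤ T.ncard := by
    refine Set.ncard_le_ncard_of_injOn (fun n => 2 * n) ?_ (hinj.mono (Set.subset_univ _)) hTfin
    rintro n ⟨⟨hn0, hnφ⟩, heven⟩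
    refine ⟨(by omega : 0 < 2*n), ?_⟩
    rw [Nat.totient_mul_of_prime_of_dvd Nat.prime_two heven.two_dvd, hnφ]
  have hsplit : S = O ∪ E := by
    ext n; simp only [hO, hE, Set.mem_union, Set.mem_setOf_eq, Set.mem_sep_iff]
    constructor
    · intro hn; rcases Nat.even_or_odd n with h | h
      · exact Or.inr ⟨hn, h⟩
      · exact Or.inl ⟨hn, h⟩
    · rintro (⟨hn, -⟩ | ⟨hn, -⟩) <;> exact hn
  calc totA m = S.ncard := rfl
  _ = (O ∪ E).ncard := by rw [← hsplit]
  _ ≤ O.ncard + E.ncard := Set.ncard_union_le _ _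
  _ ≤ T.ncard + T.ncard := by omega
  _ = 2 * totA (2 * m) := by rw [hT]; unfold totA; ring

lemma totVl_step {ℓ m : ℕ} (hℓ : 0 < ℓ) (hm : m ∈ totVl ℓ) : 2 * m ∈ totVl (ℓ + 1) := by
  obtain ⟨⟨n, hn0, hnφ⟩, hmod⟩ := hm
  have hmpos : 0 < m := by
    rcases Nat.eq_zero_or_pos m with rfl | h
    · rw [Nat.zero_mod] at hmod
      exact absurd hmod.symm (pow_pos two_pos ℓ).ne'
    · exact h
  constructor
  · -- 2m is a totient
    rcases Nat.even_or_odd n with heven | hodd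
    · exact ⟨2 * n, by omega, by
        rw [Nat.totient_mul_of_prime_of_dvd Nat.prime_two heven.two_dvd, hnφ]⟩
    · refine ⟨4 * n, by omega, ?_⟩
      have hcop : Nat.Coprime 4 n := by
        have : Nat.Coprime 2 n := Nat.coprime_two_left.mpr hodd
        exact Nat.Coprime.pow_left 2 this
      rw [Nat.totient_mul hcop, hnφ, show Nat.totient 4 = 2 by decide]
  · -- congruence
    have h1 : 2 ^ (ℓ + 1 + 1) = 2 * 2 ^ (ℓ + 1) := by ring
    have h2 : 2 ^ (ℓ + 1) = 2 * 2 ^ ℓ := by ring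
    rw [h1, Nat.mul_mod_mul_left, hmod, ← h2]

/-- If the multiplicities of totients in `𝒱^{ℓ₀}` are unbounded for some
positive integer `ℓ₀`, then for every `n ≥ 0` the multiplicities in `𝒱^{ℓ₀+n}` are unbounded. -/
theorem stmt_7 (ℓ₀ : ℕ) (hℓ₀ : 0 < ℓ₀)
    (h : ∀ N : ℕ, ∃ m ∈ totVl ℓ₀, N ≤ totA m) :
    ∀ n : ℕ, ∀ N : ℕ, ∃ m ∈ totVl (ℓ₀ + n), N ≤ totA m := by
  intro n
  induction n with
  | zero => simpa using h
  | succ k ih =>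
    intro N
    obtain ⟨m, hm, hA⟩ := ih (2 * N)
    have hmpos : 0 < m := by
      have h2 := hm.2
      rcases Nat.eq_zero_or_pos m with rfl | hp
      · rw [Nat.zero_mod] at h2
        exact absurd h2.symm (pow_pos two_pos _).ne'
      · exact hp
    refine ⟨2 * m, ?_, ?_⟩
    · exact totVl_step (by omega : 0 < ℓ₀ + k) hm
    · have := totA_le_two_mul hmpos
      omega
end

section
/- Assume Dickson's k-tuples conjecture: for every finite family of linear forms f_i(n) = a_i·n + b_i (i = 1,…,k) with positive integers a_i, if for every prime p there exists an integer n such that p does not divide f_1(n)···f_k(n), then there are infinitely many positive integers n for which f_1(n), …, f_k(n) are all prime. Then for every positive integer k there exists m ∈ 𝒱² with A(m) ≥ k; in particular the set of multiplicities {A(m) : m ∈ 𝒱²} is unbounded. -/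
open Filter Topology
open scoped Classical

lemma tot_sq_bound : ∀ n : ℕ, n ≤ 2 * n.totient ^ 2 ∧ (Odd n → n ≤ n.totient ^ 2) := by
  intro n
  induction n using Nat.recOnPosPrimePosCoprime with
  | prime_pow p a hp ha =>
      have hp' : p.Prime := hp
      rw [Nat.totient_prime_pow hp' ha]
      rcases hp'.eq_two_or_odd' with rfl | hodd
      · constructor
        · have h1 : (2:ℕ) ^ a ≤ 2 ^ (2*a - 1) := Nat.pow_le_pow_right (by norm_num) (by omega)
          calc (2:ℕ)^a ≤ 2 ^ (2*a-1) := h1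
            _ = 2 * (2^(a-1))^2 := by
                rw [← pow_mul]
                rw [show 2*a - 1 = 1 + (a-1)*2 by omega, pow_add, pow_one]
            _ = 2 * (2^(a-1) * (2-1))^2 := by norm_num
        · intro hodd
          exact absurd hodd (Nat.not_odd_iff_even.mpr (Nat.even_pow.mpr ⟨even_two, by omega⟩))
      · have h3 : 3 ≤ p := hp'.two_le.lt_of_ne (by
          intro h; rw [← h] at hodd; exact (Nat.not_odd_iff_even.mpr even_two) hodd)
        have key : p ^ a ≤ (p^(a-1) * (p-1))^2 := by
          have h1 : p ≤ (p-1)*(p-1) := by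
            calc p ≤ 2*(p-1) := by omega
              _ ≤ (p-1)*(p-1) := Nat.mul_le_mul_right _ (by omega)
          have h2 : p^(a-1) ≤ p^(a-1) * p^(a-1) := Nat.le_mul_of_pos_right _ (by positivity)
          calc p^a = p^(a-1) * p := by rw [← pow_succ]; congr 1; omega
            _ ≤ (p^(a-1) * p^(a-1)) * ((p-1)*(p-1)) := Nat.mul_le_mul h2 h1
            _ = (p^(a-1) * (p-1))^2 := by ring
        exact ⟨key.trans (Nat.le_mul_of_pos_left _ (by norm_num)), fun _ => key⟩
  | zero => simp
  | one => simp
  | coprime a b ha hb hab Pa Pb =>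
      rw [Nat.totient_mul hab]
      have hoddcase : Odd a → Odd b → a * b ≤ (a.totient * b.totient)^2 := by
        intro h1 h2
        calc a * b ≤ a.totient^2 * b.totient^2 := Nat.mul_le_mul (Pa.2 h1) (Pb.2 h2)
          _ = (a.totient * b.totient)^2 := by ring
      constructor
      · by_cases hA : Odd a
        · calc a * b ≤ a.totient^2 * (2 * b.totient^2) := Nat.mul_le_mul (Pa.2 hA) Pb.1
            _ = 2 * (a.totient * b.totient)^2 := by ring
        · have hB : Odd b := by
            rw [Nat.odd_iff] at hA ⊢
            have : ¬ (2 ∣ a) → False := fun h => by omega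
            rcases Nat.even_or_odd b with he | ho
            · exfalso
              have h2a : 2 ∣ a := by omega
              have h2b : 2 ∣ b := he.two_dvd
              have := Nat.eq_one_of_dvd_coprimes hab h2a h2b
              omega
            · exact Nat.odd_iff.mp ho
          calc a * b ≤ (2 * a.totient^2) * b.totient^2 := Nat.mul_le_mul Pa.1 (Pb.2 hB)
            _ = 2 * (a.totient * b.totient)^2 := by ring
      · intro hab2
        obtain ⟨h1, h2⟩ := (Nat.odd_mul).mp hab2
        exact hoddcase h1 h2

lemma tot_fiber_finite (m : ℕ) : {n : ℕ | 0 < n ∧ n.totient = m}.Finite := by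
  apply Set.Finite.subset (Set.finite_Iic (2 * m ^ 2))
  rintro n ⟨hn, rfl⟩
  exact (tot_sq_bound n).1


abbrev DicksonHyp : Prop :=
  ∀ k : ℕ, ∀ a b : Fin k → ℕ, (∀ i, 0 < a i) →
      (∀ p : ℕ, p.Prime → ∃ n : ℕ, ¬ p ∣ ∏ i, (a i * n + b i)) →
      {n : ℕ | 0 < n ∧ ∀ i, (a i * n + b i).Prime}.Infinite

lemma p3_infinite (dickson : DicksonHyp) : {q : ℕ | q.Prime ∧ q % 4 = 3}.Infinite := by
  have h := dickson 1 (fun _ => 4) (fun _ => 3) (fun _ => by norm_num) ?_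
  · refine Set.infinite_of_injOn_mapsTo (f := fun n => 4 * n + 3) ?_ ?_ h
    · intro x _ y _ hxy
      dsimp only at hxy
      omega
    · rintro n ⟨-, hn⟩
      have h0 := hn 0
      dsimp only at h0 ⊢
      exact ⟨h0, by omega⟩
  · intro p hp
    by_cases h3 : p = 3
    · refine ⟨1, ?_⟩
      subst h3
      simp [Fin.prod_univ_one]
    · refine ⟨p, ?_⟩
      rw [Fin.prod_univ_one]
      intro hdvd
      have h4 : p ∣ 4 * p := dvd_mul_left p 4
      have : p ∣ 3 := by simpa using Nat.dvd_sub hdvd h4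
      exact h3 ((Nat.prime_dvd_prime_iff_eq hp (by norm_num)).mp this)

lemma main_lemma (dickson : DicksonHyp) (k : ℕ) (hk : 0 < k) :
    ∃ m ∈ totVl 2, k ≤ totA m := by
  classical
  obtain ⟨t, hts, htc⟩ := (p3_infinite dickson).exists_subset_card_eq k
  obtain ⟨q, hqdef⟩ : ∃ q : Fin k → ℕ,
      q = fun i => (t.equivFin.symm (Fin.cast htc.symm i) : ℕ) := ⟨_, rfl⟩
  have hq3 : ∀ i, (q i).Prime ∧ q i % 4 = 3 := by
    intro i
    rw [hqdef]
    exact hts (t.equivFin.symm (Fin.cast htc.symm i)).2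
  have hqinj : Function.Injective q := by
    intro i j hij
    rw [hqdef] at hij
    have h2 := t.equivFin.symm.injective (Subtype.ext hij)
    exact Fin.ext (by simpa using congrArg Fin.val h2)
  obtain ⟨M, hMdef⟩ : ∃ M : ℕ,
      M = ∏ p ∈ (Finset.range (k + 1)).filter (fun p => p.Prime ∧ p % 2 = 1), p := ⟨_, rfl⟩
  have hModd : M % 2 = 1 := by
    rw [hMdef]
    refine Finset.prod_induction _ (fun x => x % 2 = 1)
      (fun x y hx hy => by
        have hx' : x % 2 = 1 := hx
        have hy' : y % 2 = 1 := hy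
        show (x * y) % 2 = 1
        rw [Nat.mul_mod, hx', hy']) rfl ?_
    intro x hx
    exact (Finset.mem_filter.mp hx).2.2
  have hMpos : 0 < M := by
    rw [hMdef]
    exact Finset.prod_pos fun p hp => (Finset.mem_filter.mp hp).2.1.pos
  obtain ⟨e, hedef⟩ : ∃ e : Fin k → ℕ,
      e = fun i => ∏ j ∈ Finset.univ.erase i, (q j / 2) := ⟨_, rfl⟩
  obtain ⟨O, hOdef⟩ : ∃ O : ℕ, O = ∏ j, (q j / 2) := ⟨_, rfl⟩
  have hq2 : ∀ i, q i - 1 = 2 * (q i / 2) ∧ (q i / 2) % 2 = 1 ∧ 0 < q i / 2 := by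
    intro i
    have := (hq3 i).2
    omega
  have he : ∀ i, (q i / 2) * e i = O := by
    intro i
    simp only [hedef, hOdef]
    exact Finset.mul_prod_erase Finset.univ (fun j => q j / 2) (Finset.mem_univ i)
  have hOodd : O % 2 = 1 := by
    rw [hOdef]
    refine Finset.prod_induction (fun j => q j / 2) (fun x => x % 2 = 1)
      (fun x y hx hy => by
        have hx' : x % 2 = 1 := hx
        have hy' : y % 2 = 1 := hy
        show (x * y) % 2 = 1
        rw [Nat.mul_mod, hx', hy']) rfl ?_
    intro x _
    exact (hq2 x).2.1
  have hepos : ∀ i, 0 < e i := by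
    intro i
    simp only [hedef]
    exact Finset.prod_pos fun j _ => (hq2 j).2.2
  obtain ⟨a, hadef⟩ : ∃ a : Fin k → ℕ, a = fun i => 4 * (M * e i) := ⟨_, rfl⟩
  obtain ⟨b, hbdef⟩ : ∃ b : Fin k → ℕ, b = fun i => 2 * (M * e i) + 1 := ⟨_, rfl⟩
  have hadvd : ∀ i, a i = 4 * (M * e i) := fun i => by rw [hadef]
  have hbeq : ∀ i, b i = 2 * (M * e i) + 1 := fun i => by rw [hbdef]
  have hapos : ∀ i, 0 < a i := by
    intro i
    rw [hadvd i]
    exact Nat.mul_pos (by norm_num) (Nat.mul_pos hMpos (hepos i))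
  have key : ∀ (p : ℕ), p.Prime → ∀ i, p ∣ a i → p ∣ 2 * (M * e i) := by
    intro p hp i hdvd
    rw [hadvd i] at hdvd
    rcases hp.eq_two_or_odd with rfl | hodd
    · exact dvd_mul_right 2 _
    · have h4 : ¬ p ∣ 4 := by
        intro h
        have h2 : p ∣ 2 := hp.dvd_of_dvd_pow (n := 2) (by norm_num at h ⊢; exact h)
        have h3 := (Nat.prime_dvd_prime_iff_eq hp Nat.prime_two).mp h2
        omega
      have hcop : Nat.Coprime p 4 := (Nat.Prime.coprime_iff_not_dvd hp).mpr h4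
      exact (hcop.dvd_of_dvd_mul_left hdvd).mul_left 2
  have hcond : ∀ p : ℕ, p.Prime → ∃ n : ℕ, ¬ p ∣ ∏ i, (a i * n + b i) := by
    intro p hp
    haveI : Fact p.Prime := ⟨hp⟩
    have hb1 : ∀ i, p ∣ a i → ((b i : ZMod p) = 1) := by
      intro i h
      have h2 := key p hp i h
      have h0 : ((2 * (M * e i) : ℕ) : ZMod p) = 0 :=
        (ZMod.natCast_eq_zero_iff _ _).mpr h2
      rw [hbeq i]
      push_cast at h0 ⊢
      rw [h0, zero_add]
    suffices hz : ∃ z : ZMod p, ∀ i, (a i : ZMod p) * z + (b i : ZMod p) ≠ 0 by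
      obtain ⟨z, hz⟩ := hz
      refine ⟨z.val, fun hdvd => ?_⟩
      obtain ⟨i, -, hi⟩ := (Prime.dvd_finset_prod_iff hp.prime _).mp hdvd
      have h0 : ((a i * z.val + b i : ℕ) : ZMod p) = 0 :=
        (ZMod.natCast_eq_zero_iff _ _).mpr hi
      push_cast at h0
      rw [ZMod.natCast_rightInverse z] at h0
      exact hz i h0
    by_cases hall : ∀ i, p ∣ a i
    · refine ⟨0, fun i => ?_⟩
      rw [mul_zero, zero_add, hb1 i (hall i)]
      exact one_ne_zero
    · push_neg at hall
      obtain ⟨i0, hi0⟩ := hall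
      have hpM : ¬ p ∣ M := by
        intro h
        exact hi0 (by rw [hadvd i0]; exact Dvd.dvd.mul_left (h.mul_right (e i0)) 4)
      have hp2 : p % 2 = 1 := by
        rcases hp.eq_two_or_odd with rfl | hodd
        · exact absurd (by rw [hadvd i0]; exact ⟨2 * (M * e i0), by ring⟩) hi0
        · exact hodd
      have hpk : k < p := by
        by_contra hle
        push_neg at hle
        refine hpM ?_
        rw [hMdef]
        exact Finset.dvd_prod_of_mem _
          (Finset.mem_filter.mpr ⟨Finset.mem_range.mpr (by omega), hp, hp2⟩)
      by_contra hcon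
      push_neg at hcon
      choose f hf using hcon
      have hinj : Function.Injective f := by
        intro z w hzw
        by_cases hai : (a (f z) : ZMod p) = 0
        · exfalso
          have hdvd : p ∣ a (f z) := (ZMod.natCast_eq_zero_iff _ _).mp hai
          have h1 := hf z
          rw [hai, zero_mul, zero_add, hb1 _ hdvd] at h1
          exact one_ne_zero h1
        · have h1 := hf z
          have h2 := hf w
          rw [← hzw] at h2
          have h3 : (a (f z) : ZMod p) * z = (a (f z) : ZMod p) * w := by
            linear_combination h1 - h2
          exact mul_left_cancel₀ hai h3
      have hcard := Fintype.card_le_of_injective f hinj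
      rw [ZMod.card, Fintype.card_fin] at hcard
      omega
  have hT := dickson k a b hapos hcond
  have hex : ∃ n0, n0 ∈ {n : ℕ | 0 < n ∧ ∀ i, (a i * n + b i).Prime} ∧
      Finset.univ.sup q < n0 := by
    by_contra hcon
    push_neg at hcon
    exact hT (Set.Finite.subset (Set.finite_Iic (Finset.univ.sup q)) fun n hn => hcon n hn)
  obtain ⟨n0, ⟨hn0pos, hPp⟩, hn0B⟩ := hex
  obtain ⟨P, hPdef⟩ : ∃ P : Fin k → ℕ, P = fun i => a i * n0 + b i := ⟨_, rfl⟩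
  have hPeq : ∀ i, P i = a i * n0 + b i := fun i => by rw [hPdef]
  have hPprime : ∀ i, (P i).Prime := by
    intro i
    rw [hPeq i]
    exact hPp i
  have hqlt : ∀ i j, q j < P i := by
    intro i j
    have h1 : q j ≤ Finset.univ.sup q := Finset.le_sup (Finset.mem_univ j)
    have h2 : n0 ≤ a i * n0 := Nat.le_mul_of_pos_left n0 (hapos i)
    have h3 : 1 ≤ b i := by rw [hbeq i]; omega
    have h4 := hPeq i
    omega
  obtain ⟨m, hmdef⟩ : ∃ m : ℕ, m = 4 * M * O * (2 * n0 + 1) := ⟨_, rfl⟩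
  have htot : ∀ i, (q i * P i).totient = m := by
    intro i
    have hqp : q i ≠ P i := (hqlt i i).ne
    have hcop : Nat.Coprime (q i) (P i) :=
      (Nat.coprime_primes (hq3 i).1 (hPprime i)).mpr hqp
    rw [Nat.totient_mul hcop, Nat.totient_prime (hq3 i).1, Nat.totient_prime (hPprime i)]
    have h2 : P i - 1 = 2 * (M * e i) * (2 * n0 + 1) := by
      have h5 : P i = 4 * (M * e i) * n0 + (2 * (M * e i) + 1) := by
        rw [hPeq i, hadvd i, hbeq i]
      rw [h5, ← add_assoc, Nat.add_sub_cancel]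
      ring
    rw [(hq2 i).1, h2, hmdef]
    calc 2 * (q i / 2) * (2 * (M * e i) * (2 * n0 + 1))
        = 4 * M * ((q i / 2) * e i) * (2 * n0 + 1) := by ring
      _ = 4 * M * O * (2 * n0 + 1) := by rw [he i]
  have i0 : Fin k := ⟨0, hk⟩
  have hpos : ∀ i, 0 < q i * P i := fun i =>
    Nat.mul_pos (hq3 i).1.pos (hPprime i).pos
  have hmem : m ∈ totVl 2 := by
    constructor
    · exact ⟨q i0 * P i0, hpos i0, htot i0⟩
    · show m % 2 ^ (2 + 1) = 2 ^ 2
      have hW : (M * O * (2 * n0 + 1)) % 2 = 1 := by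
        rw [Nat.mul_mod, Nat.mul_mod M O, hModd, hOodd]
        omega
      have hm4 : m = 4 * (M * O * (2 * n0 + 1)) := by rw [hmdef]; ring
      norm_num
      omega
  refine ⟨m, hmem, ?_⟩
  have hFinj : Function.Injective (fun i => q i * P i) := by
    intro i j hij
    dsimp only at hij
    have hd : q i ∣ q j * P j := hij ▸ dvd_mul_right (q i) (P i)
    rcases ((hq3 i).1.dvd_mul.mp hd) with h | h
    · exact hqinj ((Nat.prime_dvd_prime_iff_eq (hq3 i).1 (hq3 j).1).mp h)
    · exact absurd ((Nat.prime_dvd_prime_iff_eq (hq3 i).1 (hPprime j)).mp h) (hqlt j i).ne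
  have hcard : (Finset.image (fun i => q i * P i) Finset.univ).card = k := by
    rw [Finset.card_image_of_injective _ hFinj, Finset.card_univ, Fintype.card_fin]
  have hsub : ↑(Finset.image (fun i => q i * P i) Finset.univ) ⊆
      {n : ℕ | 0 < n ∧ n.totient = m} := by
    intro x hx
    rw [Finset.mem_coe, Finset.mem_image] at hx
    obtain ⟨i, -, rfl⟩ := hx
    exact ⟨hpos i, htot i⟩
  calc k = (Finset.image (fun i => q i * P i) Finset.univ).card := hcard.symm
    _ = (↑(Finset.image (fun i => q i * P i) Finset.univ) : Set ℕ).ncard :=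
        (Set.ncard_coe_finset _).symm
    _ ≤ totA m := Set.ncard_le_ncard hsub (tot_fiber_finite m)

/-- Dickson's k-tuples conjecture implies that for every positive integer `k`
there is `m ∈ 𝒱²` with `A(m) ≥ k`; in particular `{A(m) : m ∈ 𝒱²}` is unbounded. -/
theorem stmt_8
    (dickson : ∀ k : ℕ, ∀ a b : Fin k → ℕ, (∀ i, 0 < a i) →
      (∀ p : ℕ, p.Prime → ∃ n : ℕ, ¬ p ∣ ∏ i, (a i * n + b i)) →
      {n : ℕ | 0 < n ∧ ∀ i, (a i * n + b i).Prime}.Infinite) :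
    (∀ k : ℕ, 0 < k → ∃ m ∈ totVl 2, k ≤ totA m) ∧
    (∀ N : ℕ, ∃ m ∈ totVl 2, N ≤ totA m) := by
  have h1 : ∀ k : ℕ, 0 < k → ∃ m ∈ totVl 2, k ≤ totA m := main_lemma dickson
  refine ⟨h1, fun N => ?_⟩
  obtain ⟨m, hm, hle⟩ := h1 (N + 1) (Nat.succ_pos N)
  exact ⟨m, hm, (Nat.le_succ N).trans hle⟩
end

section
/- For each integer ℓ ≥ 1 there exists a constant C_ℓ > 0 such that for all sufficiently large x, V^ℓ(x) ≤ C_ℓ · (x / log x) · (log log x)^ℓ. -/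
open Filter Topology
open scoped Classical

noncomputable section StmtAux
open Finset

def PiN (n : ℕ) : ℕ := ((Finset.range (n+1)).filter Nat.Prime).card

lemma cheb (n : ℕ) (hn : 2 ≤ n) : (PiN n : ℝ) * Real.log n ≤ 10 * n := by
  set s := Nat.sqrt n with hs
  set T := (Finset.Ico (s + 1) (n+1)).filter Nat.Prime with hT
  -- (s+1)^card T ≤ 4^n
  have h1 : (s + 1) ^ T.card ≤ ∏ p ∈ T, p := by
    apply Finset.pow_card_le_prod
    intro p hp
    exact (Finset.mem_Ico.mp (Finset.mem_filter.mp hp).1).1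
  have h2 : ∏ p ∈ T, p ≤ primorial n := by
    apply Finset.prod_le_prod_of_subset_of_one_le'
    · intro p hp
      rw [Finset.mem_filter] at hp ⊢
      exact ⟨Finset.mem_range.mpr (Finset.mem_Ico.mp hp.1).2, hp.2⟩
    · intro p hp _
      exact ((Finset.mem_filter.mp hp).2).one_lt.le
  have h3 : (s + 1) ^ T.card ≤ 4 ^ n := le_trans (h1.trans h2) (primorial_le_4_pow n)
  -- logs
  have hlogs : (0:ℝ) < Real.log (s+1) := by
    have : (2:ℝ) ≤ ((s+1:ℕ):ℝ) := by
      have : 1 ≤ s := Nat.one_le_iff_ne_zero.mpr (by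
        simp [hs, Nat.sqrt_eq_zero]; omega)
      exact_mod_cast Nat.succ_le_succ this
    have := Real.log_pos (by push_cast at this ⊢; linarith)
    simpa using this
  have hA : (T.card : ℝ) * Real.log (s+1) ≤ n * Real.log 4 := by
    have hc : ((s+1:ℕ):ℝ) ^ T.card ≤ (4:ℝ) ^ n := by exact_mod_cast h3
    have := Real.log_le_log (by positivity) hc
    rwa [Real.log_pow, Real.log_pow, Nat.cast_add, Nat.cast_one] at this
  have hB : Real.log n ≤ 2 * Real.log (s+1) := by
    have hn2 : (n:ℝ) ≤ ((s+1:ℕ):ℝ) ^ 2 := by exact_mod_cast (Nat.lt_succ_sqrt' n).le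
    have := Real.log_le_log (by positivity) hn2
    rwa [Real.log_pow, Nat.cast_add, Nat.cast_one, Nat.cast_ofNat] at this
  have hlog4 : Real.log 4 ≤ 1.4 := by
    have : (4:ℝ) = 2^2 := by norm_num
    rw [this, Real.log_pow]
    have := Real.log_two_lt_d9
    norm_num at this ⊢
    linarith
  have hlogn_pos : (0:ℝ) < Real.log n := Real.log_pos (by exact_mod_cast hn)
  -- t * log n ≤ 2.8 n
  have hTn : (T.card : ℝ) * Real.log n ≤ 2.8 * n := by
    calc (T.card : ℝ) * Real.log n ≤ (T.card : ℝ) * (2 * Real.log (s+1)) := by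
          apply mul_le_mul_of_nonneg_left hB (by positivity)
      _ = 2 * ((T.card : ℝ) * Real.log (s+1)) := by ring
      _ ≤ 2 * ((n:ℝ) * Real.log 4) := by
          apply mul_le_mul_of_nonneg_left hA (by norm_num)
      _ ≤ 2.8 * n := by
          have : (0:ℝ) ≤ n := by positivity
          nlinarith
  -- (s+1) * log n ≤ 4 n
  have hs1 : 1 ≤ s := Nat.one_le_iff_ne_zero.mpr (by simp [hs, Nat.sqrt_eq_zero]; omega)
  have hnpos : (0:ℝ) < n := by positivity
  have hsqrt1 : 1 ≤ Real.sqrt n := by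
    rw [show (1:ℝ) = Real.sqrt 1 by simp]
    exact Real.sqrt_le_sqrt (by exact_mod_cast le_trans one_le_two (by exact_mod_cast hn) : (1:ℝ) ≤ n)
  have hsq : ((s:ℝ)+1) ≤ 2 * Real.sqrt n := by
    have h1 : (s:ℝ) ≤ Real.sqrt n := by
      rw [show ((s:ℝ)) = Real.sqrt ((s:ℝ)^2) by rw [Real.sqrt_sq (by positivity)]]
      apply Real.sqrt_le_sqrt
      exact_mod_cast Nat.sqrt_le' n
    linarith
  have hlogsqrt : Real.log n ≤ 2 * Real.sqrt n := by
    have h1 : Real.log (Real.sqrt n) ≤ Real.sqrt n := by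
      have := Real.log_le_sub_one_of_pos (by linarith : (0:ℝ) < Real.sqrt n)
      linarith
    have h2 : Real.log (Real.sqrt n) = Real.log n / 2 := Real.log_sqrt (by positivity)
    linarith
  have hSn : ((s:ℝ)+1) * Real.log n ≤ 4 * n := by
    calc ((s:ℝ)+1) * Real.log n ≤ (2*Real.sqrt n) * (2*Real.sqrt n) := by
          apply mul_le_mul hsq hlogsqrt hlogn_pos.le (by positivity)
      _ = 4 * (Real.sqrt n * Real.sqrt n) := by ring
      _ = 4 * n := by rw [Real.mul_self_sqrt (by positivity)]
  -- PiN n ≤ (s+1) + T.card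
  have hsplit : PiN n ≤ (s+1) + T.card := by
    have hsub : (Finset.range (n+1)).filter Nat.Prime ⊆
        (Finset.range (s+1)).filter Nat.Prime ∪ T := by
      intro p hp
      rw [Finset.mem_filter, Finset.mem_range] at hp
      rw [Finset.mem_union, Finset.mem_filter, Finset.mem_filter, Finset.mem_range,
        Finset.mem_Ico]
      rcases lt_or_ge p (s+1) with h | h
      · exact Or.inl ⟨h, hp.2⟩
      · exact Or.inr ⟨⟨h, hp.1⟩, hp.2⟩
    calc PiN n ≤ ((Finset.range (s+1)).filter Nat.Prime ∪ T).card := Finset.card_le_card hsub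
      _ ≤ ((Finset.range (s+1)).filter Nat.Prime).card + T.card := Finset.card_union_le _ _
      _ ≤ (s+1) + T.card := by
          have := (Finset.card_filter_le (Finset.range (s+1)) Nat.Prime).trans
            (le_of_eq (Finset.card_range (s+1)))
          omega
  calc (PiN n : ℝ) * Real.log n ≤ (((s:ℝ)+1) + T.card) * Real.log n := by
        apply mul_le_mul_of_nonneg_right _ hlogn_pos.le
        exact_mod_cast hsplit
    _ = ((s:ℝ)+1) * Real.log n + (T.card:ℝ) * Real.log n := by ring
    _ ≤ 4 * n + 2.8 * n := by linarith
    _ ≤ 10 * n := by nlinarith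

-- basic facts about log at 256
lemma log_ge_three {z : ℝ} (hz : 256 ≤ z) : 3 ≤ Real.log z := by
  have he : Real.exp 1 < 2.7182818286 := Real.exp_one_lt_d9
  have h3 : Real.exp 3 ≤ 256 := by
    have h1 : Real.exp 3 = (Real.exp 1)^3 := by
      rw [← Real.exp_nat_mul]; norm_num
    have h2 : (Real.exp 1)^3 < 2.7182818286^3 :=
      pow_lt_pow_left₀ he (Real.exp_pos 1).le (by norm_num)
    rw [h1]; nlinarith
  rw [Real.le_log_iff_exp_le (by linarith : (0:ℝ) < z)]
  linarith

lemma loglog_ge_one {z : ℝ} (hz : 256 ≤ z) : 1 ≤ Real.log (Real.log z) := by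
  have h3 : 3 ≤ Real.log z := log_ge_three hz
  have : Real.exp 1 ≤ 3 := by
    have := Real.exp_one_lt_d9; linarith
  calc (1:ℝ) = Real.log (Real.exp 1) := (Real.log_exp 1).symm
    _ ≤ Real.log (Real.log z) := Real.log_le_log (Real.exp_pos 1) (this.trans h3)

lemma dyadic (J : ℕ) :
    ∑ p ∈ (Finset.range (2^(J+1))).filter Nat.Prime, (1/p : ℝ)
      ≤ ∑ j ∈ Finset.range (J+1), 40/((j:ℝ)+1) := by
  induction J with
  | zero =>
    have : (Finset.range (2^1)).filter Nat.Prime = ∅ := by decide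
    rw [this]; rw [Finset.sum_empty]
    apply Finset.sum_nonneg; intro j _; positivity
  | succ J ih =>
    have hsplit : Finset.range (2^(J+2)) =
        Finset.range (2^(J+1)) ∪ Finset.Ico (2^(J+1)) (2^(J+2)) := by
      rw [Finset.range_eq_Ico, Finset.range_eq_Ico]
      exact (Finset.Ico_union_Ico_eq_Ico (Nat.zero_le _)
        (Nat.pow_le_pow_right (by norm_num) (by omega) : 2^(J+1) ≤ 2^(J+2))).symm
    have hdisj : Disjoint ((Finset.range (2^(J+1))).filter Nat.Prime)
        ((Finset.Ico (2^(J+1)) (2^(J+2))).filter Nat.Prime) := by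
      apply Finset.disjoint_filter_filter
      rw [Finset.range_eq_Ico]
      exact Finset.Ico_disjoint_Ico_consecutive _ _ _
    have hsum : ∑ p ∈ (Finset.range (2^(J+2))).filter Nat.Prime, (1/p : ℝ)
        = ∑ p ∈ (Finset.range (2^(J+1))).filter Nat.Prime, (1/p : ℝ)
        + ∑ p ∈ (Finset.Ico (2^(J+1)) (2^(J+2))).filter Nat.Prime, (1/p : ℝ) := by
      rw [hsplit, Finset.filter_union, Finset.sum_union hdisj]
    -- block bound
    have hblock : ∑ p ∈ (Finset.Ico (2^(J+1)) (2^(J+2))).filter Nat.Prime, (1/p : ℝ)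
        ≤ 40/((J:ℝ)+2) := by
      set B := (Finset.Ico (2^(J+1)) (2^(J+2))).filter Nat.Prime with hB
      have hcard : B.card ≤ PiN (2^(J+2)) := by
        apply Finset.card_le_card
        intro p hp
        rw [hB, Finset.mem_filter, Finset.mem_Ico] at hp
        rw [Finset.mem_filter, Finset.mem_range]
        exact ⟨by omega, hp.2⟩
      have hterm : ∀ p ∈ B, (1/p:ℝ) ≤ 1/(2^(J+1)) := by
        intro p hp
        rw [hB, Finset.mem_filter, Finset.mem_Ico] at hp
        apply one_div_le_one_div_of_le (by positivity)
        exact_mod_cast hp.1.1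
      calc ∑ p ∈ B, (1/p:ℝ) ≤ ∑ _p ∈ B, (1/(2^(J+1)) : ℝ) := Finset.sum_le_sum hterm
        _ = B.card * (1/(2^(J+1)) : ℝ) := by rw [Finset.sum_const]; ring
        _ ≤ PiN (2^(J+2)) * (1/(2^(J+1)) : ℝ) := by
            apply mul_le_mul_of_nonneg_right _ (by positivity)
            exact_mod_cast hcard
        _ ≤ 40/((J:ℝ)+2) := by
            have hch := cheb (2^(J+2)) (by
              calc 2 ≤ 2^2 := by norm_num
                _ ≤ 2^(J+2) := Nat.pow_le_pow_right (by norm_num) (by omega))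
            have hlog : Real.log ((2:ℕ)^(J+2) : ℕ) = ((J:ℝ)+2) * Real.log 2 := by
              push_cast
              rw [Real.log_pow]
              push_cast; ring
            rw [hlog] at hch
            have hl2 : (0.6931471803 : ℝ) < Real.log 2 := Real.log_two_gt_d9
            have hJ2 : (0:ℝ) < (J:ℝ)+2 := by positivity
            have hPiN : (0:ℝ) ≤ (PiN (2^(J+2)) : ℝ) := by positivity
            have h2pow : (((2:ℕ)^(J+2) : ℕ) : ℝ) = 2 * 2^(J+1) := by
              push_cast; ring
            rw [h2pow] at hch
            have hp2 : (0:ℝ) < (2:ℝ)^(J+1) := by positivity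
            have hkey : (PiN (2^(J+2)) : ℝ) * ((J:ℝ)+2) ≤ 40 * 2^(J+1) := by
              nlinarith
            rw [mul_one_div, div_le_div_iff₀ hp2 hJ2]
            linarith
    rw [hsum, Finset.sum_range_succ]
    push_cast
    have h21 : ((J:ℝ)+1+1) = (J:ℝ)+2 := by ring
    rw [h21]
    linarith

lemma mert (z : ℕ) (hz : 256 ≤ z) :
    ∑ p ∈ (Finset.range (z+1)).filter Nat.Prime, (1/p : ℝ)
      ≤ 160 * Real.log (Real.log z) := by
  set J := Nat.log 2 z with hJ
  have hzlt : z < 2^(J+1) := Nat.lt_pow_succ_log_self (by norm_num) z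
  have hsub : (Finset.range (z+1)).filter Nat.Prime ⊆
      (Finset.range (2^(J+1))).filter Nat.Prime := by
    apply Finset.filter_subset_filter
    exact Finset.range_subset_range.mpr (by omega)
  have h1 : ∑ p ∈ (Finset.range (z+1)).filter Nat.Prime, (1/p : ℝ)
      ≤ ∑ j ∈ Finset.range (J+1), 40/((j:ℝ)+1) :=
    (Finset.sum_le_sum_of_subset_of_nonneg hsub (fun i _ _ => by positivity)).trans (dyadic J)
  have h2 : ∑ j ∈ Finset.range (J+1), 40/((j:ℝ)+1) = 40 * (harmonic (J+1) : ℝ) := by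
    rw [harmonic]
    push_cast
    rw [Finset.mul_sum]
    apply Finset.sum_congr rfl
    intro j _
    rw [div_eq_mul_inv]
  have h3 : (harmonic (J+1) : ℝ) ≤ 1 + Real.log (J+1) := by
    have := harmonic_le_one_add_log (J+1)
    push_cast at this ⊢
    convert this using 3
  -- J + 1 ≤ 3 log z
  have hlz3 : 3 ≤ Real.log z := log_ge_three (by exact_mod_cast hz)
  have hll1 : 1 ≤ Real.log (Real.log z) := loglog_ge_one (by exact_mod_cast hz)
  have hJle : (J:ℝ) ≤ 2 * Real.log z := by
    have hpow : (2:ℕ)^J ≤ z := Nat.pow_log_le_self 2 (by omega)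
    have hcast : ((2:ℕ)^J : ℝ) ≤ (z:ℝ) := by exact_mod_cast hpow
    have := Real.log_le_log (by positivity) hcast
    rw [Real.log_pow] at this
    norm_num at this
    have hl2 : (0.6931471803:ℝ) < Real.log 2 := Real.log_two_gt_d9
    nlinarith [Nat.cast_nonneg (α := ℝ) J]
  have hJ1 : ((J:ℝ)+1) ≤ 3 * Real.log z := by linarith
  have h4 : Real.log ((J:ℝ)+1) ≤ Real.log 3 + Real.log (Real.log z) := by
    calc Real.log ((J:ℝ)+1) ≤ Real.log (3 * Real.log z) :=
          Real.log_le_log (by positivity) hJ1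
      _ = Real.log 3 + Real.log (Real.log z) := Real.log_mul (by norm_num) (by linarith)
  have hlog3 : Real.log 3 ≤ 2 := by
    have : (3:ℝ) ≤ Real.exp 2 := by
      have he : Real.exp 1 < 2.7182818286 := Real.exp_one_lt_d9
      have h22 : Real.exp 2 = (Real.exp 1)^2 := by rw [← Real.exp_nat_mul]; norm_num
      have he2 : (2.7182818283:ℝ) < Real.exp 1 := Real.exp_one_gt_d9
      nlinarith
    calc Real.log 3 ≤ Real.log (Real.exp 2) := Real.log_le_log (by norm_num) this
      _ = 2 := Real.log_exp 2
  calc ∑ p ∈ (Finset.range (z+1)).filter Nat.Prime, (1/p : ℝ)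
      ≤ 40 * (harmonic (J+1) : ℝ) := by rw [← h2]; exact h1
    _ ≤ 40 * (1 + Real.log ((J:ℝ)+1)) := by
        apply mul_le_mul_of_nonneg_left _ (by norm_num)
        have := h3; push_cast at this ⊢; linarith
    _ ≤ 40 * (1 + 2 + Real.log (Real.log z)) := by
        have := h4.trans (by linarith : Real.log 3 + Real.log (Real.log z) ≤ 2 + Real.log (Real.log z))
        linarith
    _ ≤ 160 * Real.log (Real.log z) := by linarith

def Gset : Set ℕ := {g | ∃ q c : ℕ, Nat.Prime q ∧ q ≠ 2 ∧ g = (q-1) * q^c}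

lemma Gset_two_le {g : ℕ} (hg : g ∈ Gset) : 2 ≤ g := by
  obtain ⟨q, c, hq, hq2, rfl⟩ := hg
  have h3 : 3 ≤ q := by
    have := hq.two_le; omega
  have : 1 ≤ q ^ c := Nat.one_le_pow _ _ (by omega)
  calc 2 = 2 * 1 := by ring
    _ ≤ (q-1) * q^c := Nat.mul_le_mul (by omega) this

lemma sum_image_le' {α : Type*} (s : Finset α) (f : α → ℕ) (h : ℕ → ℝ)
    (h0 : ∀ b, 0 ≤ h b) : ∑ b ∈ s.image f, h b ≤ ∑ a ∈ s, h (f a) := by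
  induction s using Finset.induction with
  | empty => simp
  | insert a s ha ih =>
    rw [Finset.image_insert, Finset.sum_insert ha]
    by_cases hfa : f a ∈ s.image f
    · rw [Finset.insert_eq_self.mpr hfa]
      linarith [h0 (f a)]
    · rw [Finset.sum_insert hfa]
      linarith

lemma geom_tail {q : ℕ} (hq : 3 ≤ q) (N : ℕ) :
    ∑ c ∈ Finset.range N, ((1:ℝ)/q)^c ≤ 3/2 := by
  have h3 : (3:ℝ) ≤ q := by exact_mod_cast hq
  have hr : (1:ℝ)/q ≤ 1/3 :=
    div_le_div_of_nonneg_left (by norm_num) (by norm_num) h3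
  have hr0 : (0:ℝ) ≤ 1/q := by positivity
  have hr1 : (1:ℝ)/q ≠ 1 := by intro h; rw [h] at hr; norm_num at hr
  rw [geom_sum_eq hr1]
  have hrn : (0:ℝ) ≤ ((1:ℝ)/q)^N := by positivity
  have hrn1 : ((1:ℝ)/q)^N ≤ 1 := pow_le_one₀ hr0 (by linarith)
  have key : (((1:ℝ)/q)^N - 1)/((1:ℝ)/q - 1) = (1 - (1/q)^N)/(1 - 1/q) := by
    rw [← neg_div_neg_eq]; ring_nf
  rw [key]
  calc (1 - ((1:ℝ)/q)^N)/(1 - 1/q) ≤ 1/(2/3) :=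
        div_le_div₀ (by norm_num) (by linarith) (by norm_num) (by linarith)
    _ = 3/2 := by norm_num

lemma Gsum (z : ℕ) (hz : 256 ≤ z) :
    ∑ g ∈ (Finset.range (z+1)).filter (· ∈ Gset), (1/g : ℝ)
      ≤ 1000 * Real.log (Real.log z) := by
  classical
  set P := ((Finset.range (z+2)).filter (fun q => Nat.Prime q ∧ q ≠ 2)) ×ˢ
    (Finset.range (z+1)) with hP
  set f : ℕ × ℕ → ℕ := fun qc => (qc.1 - 1) * qc.1 ^ qc.2 with hf
  have hsub : (Finset.range (z+1)).filter (· ∈ Gset) ⊆ P.image f := by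
    intro g hg
    rw [Finset.mem_filter, Finset.mem_range] at hg
    obtain ⟨hgz, q, c, hq, hq2, hgeq⟩ := hg
    have h3 : 3 ≤ q := by have := hq.two_le; omega
    have hq1 : 1 ≤ q ^ c := Nat.one_le_pow _ _ (by omega)
    have hqg : q - 1 ≤ g := by
      calc q - 1 = (q-1) * 1 := by ring
        _ ≤ (q-1) * q^c := Nat.mul_le_mul_left _ hq1
        _ = g := hgeq.symm
    have hcg : c < z + 1 := by
      have h1 : c < 2^c := Nat.lt_two_pow_self
      have h2 : 2^c ≤ q^c := Nat.pow_le_pow_left (by omega) c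
      have h4 : q^c ≤ g := by
        calc q^c = 1 * q^c := by ring
          _ ≤ (q-1) * q^c := Nat.mul_le_mul_right _ (by omega)
          _ = g := hgeq.symm
      omega
    rw [Finset.mem_image]
    refine ⟨(q, c), ?_, by simp [hf, hgeq]⟩
    rw [hP, Finset.mem_product, Finset.mem_filter, Finset.mem_range, Finset.mem_range]
    exact ⟨⟨by omega, hq, hq2⟩, hcg⟩
  have h1 : ∑ g ∈ (Finset.range (z+1)).filter (· ∈ Gset), (1/g : ℝ)
      ≤ ∑ qc ∈ P, (1/(f qc) : ℝ) := by
    calc ∑ g ∈ (Finset.range (z+1)).filter (· ∈ Gset), (1/g : ℝ)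
        ≤ ∑ g ∈ P.image f, (1/g : ℝ) :=
          Finset.sum_le_sum_of_subset_of_nonneg hsub (fun i _ _ => by positivity)
      _ ≤ ∑ qc ∈ P, (1/(f qc) : ℝ) := sum_image_le' _ _ _ (fun b => by positivity)
  have h2 : ∑ qc ∈ P, (1/(f qc) : ℝ)
      ≤ ∑ q ∈ (Finset.range (z+2)).filter (fun q => Nat.Prime q ∧ q ≠ 2), (3/q : ℝ) := by
    rw [hP, Finset.sum_product]
    apply Finset.sum_le_sum
    intro q hq
    rw [Finset.mem_filter] at hq
    have h3 : 3 ≤ q := by have := hq.2.1.two_le; omega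
    have h3r : (3:ℝ) ≤ q := by exact_mod_cast h3
    have hq1 : (0:ℝ) < (q:ℝ) - 1 := by linarith
    have hcast : ∀ c : ℕ, (1/(f (q,c)) : ℝ) = (1/((q:ℝ)-1)) * ((1:ℝ)/q)^c := by
      intro c
      rw [hf]
      simp only
      rw [Nat.cast_mul, Nat.cast_pow, Nat.cast_sub (by omega : 1 ≤ q)]
      rw [div_pow, one_pow, Nat.cast_one]
      rw [div_mul_div_comm, one_mul]
    calc ∑ c ∈ Finset.range (z+1), (1/(f (q,c)) : ℝ)
        = (1/((q:ℝ)-1)) * ∑ c ∈ Finset.range (z+1), ((1:ℝ)/q)^c := by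
          rw [Finset.mul_sum]
          exact Finset.sum_congr rfl (fun c _ => hcast c)
      _ ≤ (1/((q:ℝ)-1)) * (3/2) := by
          apply mul_le_mul_of_nonneg_left (geom_tail h3 _) (by positivity)
      _ ≤ 3/(q:ℝ) := by
          rw [show (1/((q:ℝ)-1))*(3/2) = 3/(2*((q:ℝ)-1)) by field_simp]
          rw [div_le_div_iff₀ (by linarith) (by linarith : (0:ℝ) < (q:ℝ))]
          nlinarith
  have h4 : ∑ q ∈ (Finset.range (z+2)).filter (fun q => Nat.Prime q ∧ q ≠ 2), (3/q : ℝ)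
      ≤ 3 * ∑ p ∈ (Finset.range (z+2)).filter Nat.Prime, (1/p : ℝ) := by
    rw [Finset.mul_sum]
    calc ∑ q ∈ (Finset.range (z+2)).filter (fun q => Nat.Prime q ∧ q ≠ 2), (3/q : ℝ)
        = ∑ q ∈ (Finset.range (z+2)).filter (fun q => Nat.Prime q ∧ q ≠ 2), 3*(1/q : ℝ) :=
          Finset.sum_congr rfl (fun q _ => by ring)
      _ ≤ ∑ p ∈ (Finset.range (z+2)).filter Nat.Prime, 3*(1/p : ℝ) := by
          apply Finset.sum_le_sum_of_subset_of_nonneg _ (fun i _ _ => by positivity)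
          intro a ha
          rw [Finset.mem_filter] at ha ⊢
          exact ⟨ha.1, ha.2.1⟩
  have h5 : ∑ p ∈ (Finset.range (z+2)).filter Nat.Prime, (1/p : ℝ)
      ≤ 160 * Real.log (Real.log (z+1)) := by
    have := mert (z+1) (by omega)
    simpa using this
  have h6 : Real.log (Real.log ((z:ℝ)+1)) ≤ 2 * Real.log (Real.log z) := by
    have hz2 : (256:ℝ) ≤ (z:ℝ) := by exact_mod_cast hz
    have hlz : 3 ≤ Real.log z := log_ge_three hz2
    have hllz : 1 ≤ Real.log (Real.log z) := loglog_ge_one hz2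
    have ha : ((z:ℝ)+1) ≤ (z:ℝ)^2 := by nlinarith
    have hb : Real.log ((z:ℝ)+1) ≤ 2 * Real.log z := by
      calc Real.log ((z:ℝ)+1) ≤ Real.log ((z:ℝ)^2) := Real.log_le_log (by linarith) ha
        _ = 2 * Real.log z := by rw [Real.log_pow]; push_cast; ring
    calc Real.log (Real.log ((z:ℝ)+1)) ≤ Real.log (2 * Real.log z) := by
          apply Real.log_le_log _ hb
          have : (1:ℝ) ≤ (z:ℝ) + 1 := by linarith
          exact Real.log_pos (by linarith)
      _ = Real.log 2 + Real.log (Real.log z) := Real.log_mul (by norm_num) (by linarith)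
      _ ≤ 1 + Real.log (Real.log z) := by
          have : Real.log 2 < 0.6931471808 := Real.log_two_lt_d9
          linarith
      _ ≤ 2 * Real.log (Real.log z) := by linarith
  calc ∑ g ∈ (Finset.range (z+1)).filter (· ∈ Gset), (1/g : ℝ)
      ≤ 3 * (160 * Real.log (Real.log ((z:ℝ)+1))) := by
        have := h1.trans (h2.trans h4)
        have h5' := h5
        push_cast at h5'
        nlinarith [this, mul_le_mul_of_nonneg_left h5' (by norm_num : (0:ℝ) ≤ 3)]
    _ ≤ 3 * (160 * (2 * Real.log (Real.log z))) := by
        apply mul_le_mul_of_nonneg_left _ (by norm_num)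
        apply mul_le_mul_of_nonneg_left h6 (by norm_num)
    _ ≤ 1000 * Real.log (Real.log z) := by
        have hllz : 1 ≤ Real.log (Real.log z) := loglog_ge_one (by exact_mod_cast hz)
        linarith

def IsProdG (k v : ℕ) : Prop :=
  ∃ l : List ℕ, l.length ≤ k ∧ (∀ g ∈ l, g ∈ Gset) ∧ l.prod = v

def Sfin (k z : ℕ) : Finset ℕ := (Finset.range (z+1)).filter (IsProdG k)

def NC (k z : ℕ) : ℕ := (Sfin k z).card

lemma exists_min_list (l : List ℕ) (h : l ≠ []) : ∃ g ∈ l, ∀ b ∈ l, g ≤ b := by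
  induction l with
  | nil => simp at h
  | cons a t ih =>
    rcases eq_or_ne t [] with rfl | ht
    · exact ⟨a, by simp⟩
    · obtain ⟨g, hg, hmin⟩ := ih ht
      rcases le_total a g with hag | hag
      · exact ⟨a, by simp, by
          intro b hb
          rcases List.mem_cons.mp hb with rfl | hb
          · exact le_refl _
          · exact hag.trans (hmin b hb)⟩
      · exact ⟨g, List.mem_cons_of_mem _ hg, by
          intro b hb
          rcases List.mem_cons.mp hb with rfl | hb
          · exact hag
          · exact hmin b hb⟩

lemma le_list_prod {l : List ℕ} (h1 : ∀ b ∈ l, 1 ≤ b) {g : ℕ} (hg : g ∈ l) :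
    g ≤ l.prod := by
  induction l with
  | nil => simp at hg
  | cons a t ih =>
    rw [List.prod_cons]
    have ha : 1 ≤ a := h1 a (by simp)
    have ht : ∀ b ∈ t, 1 ≤ b := fun b hb => h1 b (List.mem_cons_of_mem _ hb)
    have htp : 1 ≤ t.prod := List.one_le_prod_of_one_le ht
    rcases List.mem_cons.mp hg with rfl | hgt
    · calc g = g * 1 := by ring
        _ ≤ g * t.prod := Nat.mul_le_mul_left _ htp
    · calc g ≤ t.prod := ih ht hgt
        _ = 1 * t.prod := by ring
        _ ≤ a * t.prod := Nat.mul_le_mul_right _ ha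

lemma isProdG_one_le {k v : ℕ} (h : IsProdG k v) : 1 ≤ v := by
  obtain ⟨l, _, hG, rfl⟩ := h
  exact List.one_le_prod_of_one_le (fun b hb => le_trans (by norm_num) (Gset_two_le (hG b hb)))

lemma isProdG_mono {k k' v : ℕ} (hk : k ≤ k') (h : IsProdG k v) : IsProdG k' v := by
  obtain ⟨l, hl, hG, hp⟩ := h
  exact ⟨l, hl.trans hk, hG, hp⟩

-- covering lemma for the induction step (k ≥ 1)
lemma step_cover (k z : ℕ) (hk : 1 ≤ k) :
    Sfin (k+1) z ⊆ Sfin k z ∪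
      ((Finset.range (Nat.sqrt z + 1)).filter (· ∈ Gset)).biUnion
        (fun g => (Sfin k (z/g)).image (g * ·)) := by
  intro v hv
  rw [Sfin, Finset.mem_filter, Finset.mem_range] at hv
  obtain ⟨hvz, l, hlen, hG, hprod⟩ := hv
  rcases Nat.lt_or_ge l.length (k+1) with hlt | hge
  · apply Finset.mem_union_left
    rw [Sfin, Finset.mem_filter, Finset.mem_range]
    exact ⟨hvz, l, by omega, hG, hprod⟩
  · have hlen' : l.length = k + 1 := le_antisymm hlen hge
    have hne : l ≠ [] := by
      intro h; rw [h] at hlen'; simp at hlen'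
    obtain ⟨g, hgl, hmin⟩ := exists_min_list l hne
    have hgG : g ∈ Gset := hG g hgl
    have hg2 : 2 ≤ g := Gset_two_le hgG
    set rest := l.erase g with hrest
    have hprodeq : g * rest.prod = v := by
      rw [hrest, List.prod_erase hgl, hprod]
    have hrlen : rest.length = k := by
      rw [hrest, List.length_erase_of_mem hgl, hlen']; omega
    have hrG : ∀ b ∈ rest, b ∈ Gset := fun b hb => hG b (List.mem_of_mem_erase hb)
    have hrne : rest ≠ [] := by
      intro h; rw [h] at hrlen; simp at hrlen; omega
    -- g^2 ≤ v
    have hg2v : g * g ≤ v := by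
      obtain ⟨b, hb⟩ := List.exists_mem_of_ne_nil rest hrne
      have hgb : g ≤ b := hmin b (List.mem_of_mem_erase hb)
      have hbrest : b ≤ rest.prod :=
        le_list_prod (fun c hc => le_trans (by norm_num) (Gset_two_le (hrG c hc))) hb
      calc g * g ≤ g * rest.prod := Nat.mul_le_mul_left _ (hgb.trans hbrest)
        _ = v := hprodeq
    have hgsqrt : g ≤ Nat.sqrt z := by
      rw [Nat.le_sqrt]
      calc g * g ≤ v := hg2v
        _ ≤ z := by omega
    apply Finset.mem_union_right
    rw [Finset.mem_biUnion]
    refine ⟨g, by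
      rw [Finset.mem_filter, Finset.mem_range]; exact ⟨by omega, hgG⟩, ?_⟩
    rw [Finset.mem_image]
    refine ⟨rest.prod, ?_, hprodeq⟩
    rw [Sfin, Finset.mem_filter, Finset.mem_range]
    constructor
    · have h1 : g * rest.prod ≤ z := by omega
      have h2 := Nat.le_div_iff_mul_le (by omega : 0 < g) |>.mpr
        (by rw [Nat.mul_comm rest.prod g]; omega : rest.prod * g ≤ z)
      exact Nat.lt_succ_of_le h2
    · exact ⟨rest, by omega, hrG, rfl⟩

lemma step_card (k z : ℕ) (hk : 1 ≤ k) :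
    NC (k+1) z ≤ NC k z +
      ∑ g ∈ (Finset.range (Nat.sqrt z + 1)).filter (· ∈ Gset), NC k (z/g) := by
  calc NC (k+1) z ≤ (Sfin k z ∪
      ((Finset.range (Nat.sqrt z + 1)).filter (· ∈ Gset)).biUnion
        (fun g => (Sfin k (z/g)).image (g * ·))).card :=
        Finset.card_le_card (step_cover k z hk)
    _ ≤ NC k z + (((Finset.range (Nat.sqrt z + 1)).filter (· ∈ Gset)).biUnion
        (fun g => (Sfin k (z/g)).image (g * ·))).card := Finset.card_union_le _ _
    _ ≤ NC k z + ∑ g ∈ (Finset.range (Nat.sqrt z + 1)).filter (· ∈ Gset),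
          ((Sfin k (z/g)).image (g * ·)).card := by
        exact Nat.add_le_add_left (Finset.card_biUnion_le) _
    _ ≤ NC k z + ∑ g ∈ (Finset.range (Nat.sqrt z + 1)).filter (· ∈ Gset), NC k (z/g) := by
        apply Nat.add_le_add_left
        exact Finset.sum_le_sum (fun g _ => Finset.card_image_le)

lemma logsq_le {y : ℝ} (hy : 1 ≤ y) : (Real.log y)^2 ≤ 16 * Real.sqrt y := by
  set u := Real.sqrt (Real.sqrt y) with hu
  have hy0 : (0:ℝ) ≤ y := by linarith
  have hsy : (1:ℝ) ≤ Real.sqrt y := by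
    rw [show (1:ℝ) = Real.sqrt 1 by simp]
    exact Real.sqrt_le_sqrt hy
  have hu1 : (1:ℝ) ≤ u := by
    rw [hu, show (1:ℝ) = Real.sqrt 1 by simp]
    exact Real.sqrt_le_sqrt hsy
  have h1 : Real.log y = 4 * Real.log u := by
    rw [hu, Real.log_sqrt (by positivity), Real.log_sqrt hy0]; ring
  have h2 : Real.log u ≤ u := by
    have := Real.log_le_sub_one_of_pos (by linarith : (0:ℝ) < u)
    linarith
  have h3 : u^2 = Real.sqrt y := Real.sq_sqrt (by positivity)
  have h4 : 0 ≤ Real.log u := Real.log_nonneg hu1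
  calc (Real.log y)^2 = 16 * (Real.log u)^2 := by rw [h1]; ring
    _ ≤ 16 * u^2 := by nlinarith
    _ = 16 * Real.sqrt y := by rw [h3]

lemma natlog2_le {z : ℕ} (hz : 1 ≤ z) : (Nat.log 2 z : ℝ) ≤ 2 * Real.log z := by
  have hpow : (2:ℕ)^(Nat.log 2 z) ≤ z := Nat.pow_log_le_self 2 (by omega)
  have hcast : ((2:ℕ)^(Nat.log 2 z) : ℝ) ≤ (z:ℝ) := by exact_mod_cast hpow
  have h := Real.log_le_log (by positivity) hcast
  rw [Real.log_pow] at h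
  norm_num at h
  have hl2 : (0.6931471803:ℝ) < Real.log 2 := Real.log_two_gt_d9
  nlinarith [Nat.cast_nonneg (α := ℝ) (Nat.log 2 z)]

lemma natsqrt_le (m : ℕ) : (Nat.sqrt m : ℝ) ≤ Real.sqrt m := by
  have h : ((Nat.sqrt m : ℕ):ℝ)^2 ≤ (m:ℝ) := by exact_mod_cast Nat.sqrt_le' m
  nlinarith [Real.sq_sqrt (show (0:ℝ) ≤ (m:ℝ) by positivity),
    Real.sqrt_nonneg (m:ℝ), Nat.cast_nonneg (α := ℝ) (Nat.sqrt m),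
    sq_nonneg ((Nat.sqrt m : ℝ) - Real.sqrt m)]

lemma NC_zero (z : ℕ) : NC 0 z ≤ 1 := by
  have : Sfin 0 z ⊆ {1} := by
    intro v hv
    rw [Sfin, Finset.mem_filter] at hv
    obtain ⟨_, l, hl, _, hprod⟩ := hv
    rw [Finset.mem_singleton]
    rw [Nat.le_zero, List.length_eq_zero_iff] at hl
    rw [hl] at hprod
    simpa using hprod.symm
  calc NC 0 z ≤ ({1} : Finset ℕ).card := Finset.card_le_card this
    _ = 1 := rfl

lemma NC_one (z : ℕ) (hz : 1 ≤ z) :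
    NC 1 z ≤ 1 + PiN (z+1) + (Nat.sqrt (2*z) + 1) * (Nat.log 2 z + 1) := by
  classical
  set A := ((Finset.range (z+2)).filter Nat.Prime).image (· - 1) with hA
  set B := ((Finset.range (Nat.sqrt (2*z) + 1)) ×ˢ (Finset.range (Nat.log 2 z + 1))).image
    (fun qc : ℕ × ℕ => (qc.1 - 1) * qc.1 ^ qc.2) with hB
  have hcover : Sfin 1 z ⊆ {1} ∪ A ∪ B := by
    intro v hv
    rw [Sfin, Finset.mem_filter, Finset.mem_range] at hv
    obtain ⟨hvz, l, hl, hG, hprod⟩ := hv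
    interval_cases hll : l.length
    · rw [List.length_eq_zero_iff] at hll
      rw [hll] at hprod; simp at hprod
      simp [Finset.mem_union, ← hprod]
    · rw [List.length_eq_one_iff] at hll
      obtain ⟨g, rfl⟩ := hll
      simp at hprod
      obtain ⟨q, c, hq, hq2, hgv⟩ := hG g (by simp)
      have h3 : 3 ≤ q := by have := hq.two_le; omega
      have hgeq : v = (q-1)*q^c := by omega
      rcases Nat.eq_zero_or_pos c with rfl | hc
    -- c = 0 : v = q - 1
      · apply Finset.mem_union_left; apply Finset.mem_union_right
        rw [hA, Finset.mem_image]
        have hv1 : q - 1 = v := by rw [hgeq]; simp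
        refine ⟨q, ?_, hv1⟩
        rw [Finset.mem_filter, Finset.mem_range]
        exact ⟨by omega, hq⟩
      · apply Finset.mem_union_right
        rw [hB, Finset.mem_image]
        have hq1 : 1 ≤ q ^ c := Nat.one_le_pow _ _ (by omega)
        have hqv : q * q ≤ 2 * v := by
          have h5 : (q-1)*q ≤ (q-1)*q^c := by
            apply Nat.mul_le_mul_left
            calc q = q^1 := (pow_one q).symm
              _ ≤ q^c := Nat.pow_le_pow_right (by omega) hc
          have h6 : (q-1)*q ≤ v := h5.trans hgeq.ge
          have h7 : q*q ≤ 2*((q-1)*q) := by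
            calc q*q ≤ (2*(q-1))*q := Nat.mul_le_mul_right q (by omega)
              _ = 2*((q-1)*q) := by ring
          calc q*q ≤ 2*((q-1)*q) := h7
            _ ≤ 2*v := Nat.mul_le_mul_left 2 h6
        have hqs : q ≤ Nat.sqrt (2*z) := by
          rw [Nat.le_sqrt]; omega
        have hcl : c ≤ Nat.log 2 z := by
          have h2c : 2^c ≤ q^c := Nat.pow_le_pow_left (by omega) c
          have hqcv : q^c ≤ v := by
            calc q^c = 1 * q^c := by ring
              _ ≤ (q-1)*q^c := Nat.mul_le_mul_right _ (by omega)
              _ = v := hgeq.symm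
          exact (Nat.le_log_iff_pow_le (by norm_num) (by omega)).mpr (by omega)
        refine ⟨(q,c), ?_, by simp; omega⟩
        rw [Finset.mem_product, Finset.mem_range, Finset.mem_range]
        exact ⟨by omega, by omega⟩
  calc NC 1 z ≤ ({1} ∪ A ∪ B).card := Finset.card_le_card hcover
    _ ≤ ({1} ∪ A).card + B.card := Finset.card_union_le _ _
    _ ≤ ({1}:Finset ℕ).card + A.card + B.card := by
        have := Finset.card_union_le ({1}:Finset ℕ) A; omega
    _ ≤ 1 + PiN (z+1) + (Nat.sqrt (2*z) + 1) * (Nat.log 2 z + 1) := by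
        have hA' : A.card ≤ PiN (z+1) := by
          rw [hA, PiN]
          exact Finset.card_image_le.trans (le_of_eq (by norm_num))
        have hB' : B.card ≤ (Nat.sqrt (2*z) + 1) * (Nat.log 2 z + 1) := by
          rw [hB]
          calc B.card ≤ _ := Finset.card_image_le
            _ = (Nat.sqrt (2*z) + 1) * (Nat.log 2 z + 1) := by
                rw [Finset.card_product, Finset.card_range, Finset.card_range]
        have hone : ({1}:Finset ℕ).card = 1 := Finset.card_singleton 1
        omega

lemma sqrt_ge_16 {z : ℕ} (hz : 256 ≤ z) : (16:ℝ) ≤ Real.sqrt z := by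
  have h256 : Real.sqrt 256 = 16 := by
    rw [show (256:ℝ) = 16^2 by norm_num, Real.sqrt_sq (by norm_num)]
  rw [← h256]
  exact Real.sqrt_le_sqrt (by exact_mod_cast hz)

lemma NC_one_real (z : ℕ) (hz : 256 ≤ z) : (NC 1 z : ℝ) * Real.log z ≤ 200 * z := by
  have hzr : (256:ℝ) ≤ (z:ℝ) := by exact_mod_cast hz
  have hlz : 3 ≤ Real.log z := log_ge_three hzr
  have hz1 : (1:ℝ) ≤ (z:ℝ) := by linarith
  have hcount := NC_one z (by omega)
  have hcast : (NC 1 z : ℝ) ≤ 1 + (PiN (z+1) : ℝ)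
      + ((Nat.sqrt (2*z) : ℝ) + 1) * ((Nat.log 2 z : ℝ) + 1) := by
    exact_mod_cast hcount
  have hlogz_le : Real.log z ≤ (z:ℝ) := by
    have := Real.log_le_sub_one_of_pos (by linarith : (0:ℝ) < (z:ℝ))
    linarith
  -- π part
  have hP : (PiN (z+1) : ℝ) * Real.log z ≤ 20 * z := by
    have hch := cheb (z+1) (by omega)
    have hmono : Real.log z ≤ Real.log (z+1) := by
      apply Real.log_le_log (by linarith)
      push_cast; linarith
    have hPn : (0:ℝ) ≤ (PiN (z+1) : ℝ) := by positivity
    have : (PiN (z+1) : ℝ) * Real.log z ≤ (PiN (z+1) : ℝ) * Real.log (z+1) :=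
      mul_le_mul_of_nonneg_left hmono hPn
    have hcast2 : ((z+1:ℕ):ℝ) = (z:ℝ)+1 := by push_cast; ring
    rw [hcast2] at hch
    calc (PiN (z+1) : ℝ) * Real.log z ≤ (PiN (z+1) : ℝ) * Real.log ((z:ℝ)+1) := by
          rw [show Real.log ((z:ℝ)+1) = Real.log (((z+1:ℕ)):ℝ) by rw [hcast2]]
          exact_mod_cast this
      _ ≤ 10 * ((z:ℝ)+1) := by rw [show Real.log ((z:ℝ)+1) = Real.log (((z+1:ℕ)):ℝ) by rw [hcast2]] at hch ⊢; exact_mod_cast hch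
      _ ≤ 20 * z := by linarith
  -- sqrt-log part
  have hsq : ((Nat.sqrt (2*z) : ℝ) + 1) ≤ 2 * Real.sqrt z := by
    have h1 : (Nat.sqrt (2*z) : ℝ) ≤ Real.sqrt (2*(z:ℝ)) := by
      have h0 := natsqrt_le (2*z)
      push_cast at h0
      exact h0
    have h2 : Real.sqrt ((2:ℝ)*z) = Real.sqrt 2 * Real.sqrt z := Real.sqrt_mul (by norm_num) _
    clear hcast
    have h3 : Real.sqrt 2 ≤ 1.5 := by
      rw [show (1.5:ℝ) = Real.sqrt (1.5^2) by rw [Real.sqrt_sq (by norm_num)]]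
      exact Real.sqrt_le_sqrt (by norm_num)
    have h4 : (16:ℝ) ≤ Real.sqrt z := sqrt_ge_16 hz
    have h5 : Real.sqrt ((2:ℝ)*z) ≤ 1.5 * Real.sqrt z := by
      rw [h2]
      exact mul_le_mul_of_nonneg_right h3 (Real.sqrt_nonneg _)
    linarith
  have hL : ((Nat.log 2 z : ℝ) + 1) ≤ 3 * Real.log z := by
    have := natlog2_le (by omega : 1 ≤ z)
    linarith
  have hS : ((Nat.sqrt (2*z) : ℝ) + 1) * ((Nat.log 2 z : ℝ) + 1) * Real.log z ≤ 96 * z := by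
    have hsqz : (0:ℝ) ≤ Real.sqrt z := Real.sqrt_nonneg _
    have hlsq : (Real.log z)^2 ≤ 16 * Real.sqrt z := logsq_le hz1
    have hnn1 : (0:ℝ) ≤ (Nat.sqrt (2*z) : ℝ) + 1 := by positivity
    have hnn2 : (0:ℝ) ≤ (Nat.log 2 z : ℝ) + 1 := by positivity
    calc ((Nat.sqrt (2*z) : ℝ) + 1) * ((Nat.log 2 z : ℝ) + 1) * Real.log z
        ≤ (2 * Real.sqrt z) * (3 * Real.log z) * Real.log z := by
          apply mul_le_mul_of_nonneg_right _ (by linarith)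
          exact mul_le_mul hsq hL hnn2 (by positivity)
      _ = 6 * Real.sqrt z * (Real.log z)^2 := by ring
      _ ≤ 6 * Real.sqrt z * (16 * Real.sqrt z) := by
          apply mul_le_mul_of_nonneg_left hlsq (by positivity)
      _ = 96 * (Real.sqrt z * Real.sqrt z) := by ring
      _ = 96 * z := by rw [Real.mul_self_sqrt (by positivity)]
  have hNC : (0:ℝ) ≤ (NC 1 z : ℝ) := by positivity
  calc (NC 1 z : ℝ) * Real.log z
      ≤ (1 + (PiN (z+1) : ℝ) + ((Nat.sqrt (2*z) : ℝ) + 1) * ((Nat.log 2 z : ℝ) + 1))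
          * Real.log z := mul_le_mul_of_nonneg_right hcast (by linarith)
    _ = Real.log z + (PiN (z+1) : ℝ) * Real.log z
        + ((Nat.sqrt (2*z) : ℝ) + 1) * ((Nat.log 2 z : ℝ) + 1) * Real.log z := by ring
    _ ≤ (z:ℝ) + 20*z + 96*z := by linarith
    _ ≤ 200 * z := by linarith

theorem Nbound : ∀ k : ℕ, 1 ≤ k → ∃ C : ℝ, 0 < C ∧ ∃ Y : ℕ, 256 ≤ Y ∧ ∀ z : ℕ, Y ≤ z →
    (NC k z : ℝ) * Real.log z ≤ C * z * (Real.log (Real.log z))^k := by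
  intro k
  induction k with
  | zero => omega
  | succ k ih =>
    intro _
    rcases Nat.eq_zero_or_pos k with rfl | hk1
    · -- base case k+1 = 1
      refine ⟨200, by norm_num, 256, le_refl _, fun z hz => ?_⟩
      have h1 := NC_one_real z hz
      have hll : 1 ≤ Real.log (Real.log z) := loglog_ge_one (by exact_mod_cast hz)
      have hz0 : (0:ℝ) ≤ (z:ℝ) := by positivity
      calc (NC 1 z : ℝ) * Real.log z ≤ 200 * z := h1
        _ ≤ 200 * z * (Real.log (Real.log z))^1 := by
            rw [pow_one]
            nlinarith
    · -- inductive step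
      obtain ⟨C, hC, Y, hY256, hIH⟩ := ih hk1
      refine ⟨3001 * C, by positivity, max (Y*Y) 65536, ?_, fun z hz => ?_⟩
      · have := le_max_right (Y*Y) 65536; omega
      have hzYY : Y * Y ≤ z := le_trans (le_max_left _ _) hz
      have hz65536 : 65536 ≤ z := le_trans (le_max_right _ _) hz
      set s := Nat.sqrt z with hs
      have hsY : Y ≤ s := Nat.le_sqrt.mpr hzYY
      have hs256 : 256 ≤ s := Nat.le_sqrt.mpr (by omega : 256 * 256 ≤ z)
      have hz256 : 256 ≤ z := by omega
      have hzr : (256:ℝ) ≤ (z:ℝ) := by exact_mod_cast hz256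
      have hlz : 3 ≤ Real.log z := log_ge_three hzr
      have hllz : 1 ≤ Real.log (Real.log z) := loglog_ge_one hzr
      set Gf := (Finset.range (s + 1)).filter (· ∈ Gset) with hGf
      -- per-g bound
      have hterm : ∀ g ∈ Gf, (NC k (z/g) : ℝ) * Real.log z
          ≤ (3 * C * z * (Real.log (Real.log z))^k) * (1/g) := by
        intro g hg
        rw [hGf, Finset.mem_filter, Finset.mem_range] at hg
        have hg2 : 2 ≤ g := Gset_two_le hg.2
        have hgs : g ≤ s := by omega
        set w := z / g with hw
        have hssz : s ≤ z / s := (Nat.le_div_iff_mul_le (by omega : 0 < s)).mpr (Nat.sqrt_le z)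
        have hzsw : z / s ≤ w := Nat.div_le_div_left hgs (by omega)
        have hws : s ≤ w := le_trans hssz hzsw
        have hwY : Y ≤ w := le_trans hsY hws
        have hw256 : 256 ≤ w := by omega
        have hwz : w ≤ z := Nat.div_le_self _ _
        have hwr : (256:ℝ) ≤ (w:ℝ) := by exact_mod_cast hw256
        have hlw : 3 ≤ Real.log w := log_ge_three hwr
        have hllw1 : 1 ≤ Real.log (Real.log w) := loglog_ge_one hwr
        -- log z ≤ 3 log w
        have hlog3 : Real.log z ≤ 3 * Real.log w := by
          have hrz : Real.sqrt z ≤ (s:ℝ) + 1 := by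
            have h1 : (z:ℝ) ≤ ((s:ℝ)+1)^2 := by
              have := Nat.lt_succ_sqrt' z
              have h2 : (z:ℝ) ≤ ((s+1:ℕ):ℝ)^2 := by exact_mod_cast this.le
              push_cast at h2; linarith
            calc Real.sqrt z ≤ Real.sqrt (((s:ℝ)+1)^2) := Real.sqrt_le_sqrt h1
              _ = (s:ℝ)+1 := Real.sqrt_sq (by positivity)
          have hrz16 : (16:ℝ) ≤ Real.sqrt z := sqrt_ge_16 hz256
          have hwge : Real.sqrt z / 2 ≤ (w:ℝ) := by
            have : (s:ℝ) ≤ (w:ℝ) := by exact_mod_cast hws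
            linarith
          have hcube : (z:ℝ) ≤ (w:ℝ)^3 := by
            have h1 : (Real.sqrt z / 2)^3 ≤ (w:ℝ)^3 :=
              pow_le_pow_left₀ (by positivity) hwge 3
            have h2 : Real.sqrt z * Real.sqrt z = z := Real.mul_self_sqrt (by positivity)
            nlinarith
          calc Real.log z ≤ Real.log ((w:ℝ)^3) :=
                Real.log_le_log (by linarith) hcube
            _ = 3 * Real.log w := by rw [Real.log_pow]; push_cast; ring
        have hIHw := hIH w hwY
        have hllww : Real.log (Real.log w) ≤ Real.log (Real.log z) := by
          apply Real.log_le_log (by linarith)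
          apply Real.log_le_log (by linarith)
          exact_mod_cast hwz
        have hNCw : (0:ℝ) ≤ (NC k w : ℝ) := by positivity
        have hcastdiv : (w:ℝ) ≤ (z:ℝ)/(g:ℝ) := Nat.cast_div_le
        have hpow : (Real.log (Real.log w))^k ≤ (Real.log (Real.log z))^k :=
          pow_le_pow_left₀ (by linarith) hllww k
        calc (NC k w : ℝ) * Real.log z ≤ (NC k w : ℝ) * (3 * Real.log w) :=
              mul_le_mul_of_nonneg_left hlog3 hNCw
          _ = 3 * ((NC k w : ℝ) * Real.log w) := by ring
          _ ≤ 3 * (C * w * (Real.log (Real.log w))^k) :=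
              mul_le_mul_of_nonneg_left hIHw (by norm_num)
          _ ≤ 3 * (C * w * (Real.log (Real.log z))^k) := by
              apply mul_le_mul_of_nonneg_left _ (by norm_num)
              apply mul_le_mul_of_nonneg_left hpow (by positivity)
          _ ≤ 3 * (C * ((z:ℝ)/(g:ℝ)) * (Real.log (Real.log z))^k) := by
              apply mul_le_mul_of_nonneg_left _ (by norm_num)
              apply mul_le_mul_of_nonneg_right _ (by positivity)
              exact mul_le_mul_of_nonneg_left hcastdiv hC.le
          _ = (3 * C * z * (Real.log (Real.log z))^k) * (1/g) := by ring
      -- sum bound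
      have hGsum : ∑ g ∈ Gf, (1/g : ℝ) ≤ 1000 * Real.log (Real.log z) := by
        have h1 := Gsum s hs256
        have hlls : Real.log (Real.log s) ≤ Real.log (Real.log z) := by
          apply Real.log_le_log
          · apply Real.log_pos
            have : (256:ℝ) ≤ (s:ℝ) := by exact_mod_cast hs256
            linarith
          · apply Real.log_le_log (by
              have : (256:ℝ) ≤ (s:ℝ) := by exact_mod_cast hs256
              linarith)
            have : s ≤ z := (Nat.sqrt_le_self z)
            exact_mod_cast this
        calc ∑ g ∈ Gf, (1/g : ℝ) ≤ 1000 * Real.log (Real.log s) := h1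
          _ ≤ 1000 * Real.log (Real.log z) := by linarith
      -- combine
      have hcard := step_card k z hk1
      have hcardR : (NC (k+1) z : ℝ) ≤ (NC k z : ℝ) + ∑ g ∈ Gf, (NC k (z/g) : ℝ) := by
        have : ((NC (k+1) z : ℕ) : ℝ) ≤ ((NC k z + ∑ g ∈ Gf, NC k (z/g) : ℕ) : ℝ) := by
          exact_mod_cast hcard
        push_cast at this
        exact this
      have hlz0 : (0:ℝ) ≤ Real.log z := by linarith
      have hT1 := hIH z (le_trans (Nat.le_mul_of_pos_left Y (by omega)) hzYY)
      calc (NC (k+1) z : ℝ) * Real.log z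
          ≤ ((NC k z : ℝ) + ∑ g ∈ Gf, (NC k (z/g) : ℝ)) * Real.log z :=
            mul_le_mul_of_nonneg_right hcardR hlz0
        _ = (NC k z : ℝ) * Real.log z + ∑ g ∈ Gf, ((NC k (z/g) : ℝ) * Real.log z) := by
            rw [add_mul, Finset.sum_mul]
        _ ≤ C * z * (Real.log (Real.log z))^k
            + ∑ g ∈ Gf, (3 * C * z * (Real.log (Real.log z))^k) * (1/g) := by
            apply add_le_add hT1
            exact Finset.sum_le_sum hterm
        _ = C * z * (Real.log (Real.log z))^k
            + (3 * C * z * (Real.log (Real.log z))^k) * ∑ g ∈ Gf, (1/g : ℝ) := by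
            rw [← Finset.mul_sum]
        _ ≤ C * z * (Real.log (Real.log z))^k
            + (3 * C * z * (Real.log (Real.log z))^k) * (1000 * Real.log (Real.log z)) := by
            apply add_le_add_right
            apply mul_le_mul_of_nonneg_left hGsum (by positivity)
        _ ≤ 3001 * C * z * (Real.log (Real.log z))^(k+1) := by
            have hp : (0:ℝ) ≤ (Real.log (Real.log z))^k := by positivity
            have hzp : (0:ℝ) ≤ (z:ℝ) := by positivity
            rw [pow_succ]
            nlinarith [mul_nonneg (mul_nonneg hC.le hzp) hp]

lemma totVl_decomp (ℓ m : ℕ) (hm : m ∈ totVl ℓ) :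
    ∃ b v : ℕ, IsProdG ℓ v ∧ m = 2^b * v := by
  obtain ⟨⟨n, hn, hφ⟩, hmod⟩ := hm
  have hn0 : n ≠ 0 := by omega
  have htot := Nat.totient_eq_prod_factorization hn0
  rw [Finsupp.prod] at htot
  have hsupp : n.factorization.support = n.primeFactors := (Nat.support_factorization n)
  rw [hsupp] at htot
  set f : ℕ → ℕ := fun p => p ^ (n.factorization p - 1) * (p - 1) with hf
  set O := n.primeFactors.erase 2 with hO
  -- v : product over odd primes
  set v := ∏ p ∈ O, f p with hv
  -- m = 2^b * v
  have hbv : ∃ b, m = 2^b * v := by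
    by_cases h2 : 2 ∈ n.primeFactors
    · refine ⟨n.factorization 2 - 1, ?_⟩
      have := Finset.mul_prod_erase n.primeFactors f h2
      have hf2 : f 2 = 2 ^ (n.factorization 2 - 1) := by
        rw [hf]; norm_num
      rw [← hφ, htot, ← this, hf2, hv, hO]
    · refine ⟨0, ?_⟩
      have : n.primeFactors.erase 2 = n.primeFactors := Finset.erase_eq_of_notMem h2
      rw [← hφ, htot, hv, hO, this]
      ring
  obtain ⟨b, hb⟩ := hbv
  refine ⟨b, v, ?_, hb⟩
  -- v is a product of O.card elements of Gset
  have hprodG : IsProdG O.card v := by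
    refine ⟨O.toList.map f, ?_, ?_, ?_⟩
    · rw [List.length_map, Finset.length_toList]
    · intro g hg
      rw [List.mem_map] at hg
      obtain ⟨p, hp, rfl⟩ := hg
      rw [Finset.mem_toList, hO, Finset.mem_erase] at hp
      have hprime : p.Prime := Nat.prime_of_mem_primeFactors hp.2
      exact ⟨p, n.factorization p - 1, hprime, hp.1, by rw [hf]; ring⟩
    · rw [Finset.prod_map_toList]
  -- O.card ≤ ℓ
  have hcard : O.card ≤ ℓ := by
    by_contra hgt
    push_neg at hgt
    have hdvd2 : 2 ^ O.card ∣ v := by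
      have h1 : ∀ p ∈ O, 2 ∣ f p := by
        intro p hp
        rw [hO, Finset.mem_erase] at hp
        have hprime := Nat.prime_of_mem_primeFactors hp.2
        have h3 : 3 ≤ p := by have := hprime.two_le; omega
        have hodd : ¬ (2 ∣ p) := by
          intro hdvd
          have := (Nat.Prime.eq_one_or_self_of_dvd hprime 2 hdvd)
          omega
        have hp1 : 2 ∣ p - 1 := by omega
        rw [hf]
        exact Dvd.dvd.mul_left hp1 _
      have h2 : ∏ _p ∈ O, 2 ∣ ∏ p ∈ O, f p := Finset.prod_dvd_prod_of_dvd _ _ (fun p hp => h1 p hp)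
      rw [Finset.prod_const] at h2
      rw [hv]
      exact h2
    have hvm : v ∣ m := by rw [hb]; exact Dvd.dvd.mul_left dvd_rfl _
    have hdvdm : 2 ^ (ℓ+1) ∣ m := by
      have : 2^(ℓ+1) ∣ 2^O.card := pow_dvd_pow 2 (by omega)
      exact dvd_trans (dvd_trans this hdvd2) hvm
    have hm0 : m % 2^(ℓ+1) = 0 := Nat.mod_eq_zero_of_dvd hdvdm
    have : (0:ℕ) < 2^ℓ := Nat.pow_pos (by norm_num)
    omega
  exact isProdG_mono hcard hprodG

lemma geo2 (N : ℕ) : ∑ b ∈ Finset.range N, ((1:ℝ)/2)^b ≤ 2 := by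
  rw [geom_sum_eq (by norm_num : ((1:ℝ)/2) ≠ 1)]
  have h1 : (0:ℝ) ≤ ((1:ℝ)/2)^N := by positivity
  have h2 : ((1:ℝ)/2)^N ≤ 1 := pow_le_one₀ (by norm_num) (by norm_num)
  rw [show (((1:ℝ)/2)^N - 1)/((1:ℝ)/2 - 1) = (1 - ((1:ℝ)/2)^N) * 2 by ring]
  linarith

lemma M_cover (ℓ X : ℕ) (hX : 1 ≤ X) :
    (Finset.range (X+1)).filter (· ∈ totVl ℓ) ⊆
      (Finset.range (Nat.log 2 X + 1)).biUnion
        (fun b => (Sfin ℓ (X/2^b)).image (2^b * ·)) := by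
  intro m hm
  rw [Finset.mem_filter, Finset.mem_range] at hm
  obtain ⟨hmX, hmV⟩ := hm
  obtain ⟨b, v, hv, hbv⟩ := totVl_decomp ℓ m hmV
  have hv1 : 1 ≤ v := isProdG_one_le hv
  have hm0 : m ≠ 0 := by
    intro h
    have h2 := hmV.2
    rw [h] at h2
    have h3 : (0:ℕ) < 2^ℓ := Nat.pow_pos (by norm_num)
    simp at h2
    omega
  have h2b : 2^b ≤ X := by
    calc 2^b = 2^b * 1 := by ring
      _ ≤ 2^b * v := Nat.mul_le_mul_left _ hv1
      _ = m := hbv.symm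
      _ ≤ X := by omega
  have hbL : b ≤ Nat.log 2 X := (Nat.le_log_iff_pow_le (by norm_num) (by omega)).mpr h2b
  rw [Finset.mem_biUnion]
  refine ⟨b, Finset.mem_range.mpr (by omega), ?_⟩
  rw [Finset.mem_image]
  refine ⟨v, ?_, hbv.symm⟩
  rw [Sfin, Finset.mem_filter, Finset.mem_range]
  constructor
  · have hvX : v * 2^b ≤ X := by
      rw [Nat.mul_comm]; omega
    have := (Nat.le_div_iff_mul_le (Nat.pow_pos (by norm_num))).mpr hvX
    omega
  · exact hv

lemma M_card (ℓ X : ℕ) (hX : 1 ≤ X) :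
    ((Finset.range (X+1)).filter (· ∈ totVl ℓ)).card ≤
      ∑ b ∈ Finset.range (Nat.log 2 X + 1), NC ℓ (X/2^b) := by
  calc ((Finset.range (X+1)).filter (· ∈ totVl ℓ)).card
      ≤ ((Finset.range (Nat.log 2 X + 1)).biUnion
        (fun b => (Sfin ℓ (X/2^b)).image (2^b * ·))).card :=
        Finset.card_le_card (M_cover ℓ X hX)
    _ ≤ ∑ b ∈ Finset.range (Nat.log 2 X + 1), ((Sfin ℓ (X/2^b)).image (2^b * ·)).card :=
        Finset.card_biUnion_le
    _ ≤ ∑ b ∈ Finset.range (Nat.log 2 X + 1), NC ℓ (X/2^b) :=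
        Finset.sum_le_sum (fun b _ => Finset.card_image_le)

theorem main_count (ℓ : ℕ) (hℓ : 1 ≤ ℓ) : ∃ C : ℝ, 0 < C ∧ ∃ Z : ℕ, 256 ≤ Z ∧
    ∀ X : ℕ, Z ≤ X →
    (((Finset.range (X+1)).filter (· ∈ totVl ℓ)).card : ℝ) * Real.log X
      ≤ C * X * (Real.log (Real.log X))^ℓ := by
  obtain ⟨C, hC, Y, hY256, hIH⟩ := Nbound ℓ hℓ
  refine ⟨6*C + 96, by positivity, max (Y*Y) 65536, ?_, fun X hX => ?_⟩
  · have := le_max_right (Y*Y) 65536; omega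
  have hXYY : Y * Y ≤ X := le_trans (le_max_left _ _) hX
  have hX65536 : 65536 ≤ X := le_trans (le_max_right _ _) hX
  set s := Nat.sqrt X with hs
  have hsY : Y ≤ s := Nat.le_sqrt.mpr hXYY
  have hs256 : 256 ≤ s := Nat.le_sqrt.mpr (by omega : 256 * 256 ≤ X)
  have hX256 : 256 ≤ X := by omega
  have hXr : (256:ℝ) ≤ (X:ℝ) := by exact_mod_cast hX256
  have hlX : 3 ≤ Real.log X := log_ge_three hXr
  have hllX : 1 ≤ Real.log (Real.log X) := loglog_ge_one hXr
  set L := Nat.log 2 X with hL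
  -- per-b bounds
  have hsmall : ∀ b ∈ (Finset.range (L+1)).filter (fun b => 2^b ≤ s),
      (NC ℓ (X/2^b) : ℝ) * Real.log X
        ≤ (3 * C * X * (Real.log (Real.log X))^ℓ) * ((1:ℝ)/2)^b := by
    intro b hb
    rw [Finset.mem_filter] at hb
    have hgs : 2^b ≤ s := hb.2
    have hg1 : 0 < 2^b := Nat.pow_pos (by norm_num)
    set w := X / 2^b with hw
    have hssz : s ≤ X / s := (Nat.le_div_iff_mul_le (by omega : 0 < s)).mpr (Nat.sqrt_le X)
    have hzsw : X / s ≤ w := Nat.div_le_div_left hgs (by omega)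
    have hws : s ≤ w := le_trans hssz hzsw
    have hwY : Y ≤ w := le_trans hsY hws
    have hw256 : 256 ≤ w := by omega
    have hwz : w ≤ X := Nat.div_le_self _ _
    have hwr : (256:ℝ) ≤ (w:ℝ) := by exact_mod_cast hw256
    have hlw : 3 ≤ Real.log w := log_ge_three hwr
    have hlog3 : Real.log X ≤ 3 * Real.log w := by
      have hrz : Real.sqrt X ≤ (s:ℝ) + 1 := by
        have h1 : (X:ℝ) ≤ ((s:ℝ)+1)^2 := by
          have := Nat.lt_succ_sqrt' X
          have h2 : (X:ℝ) ≤ ((s+1:ℕ):ℝ)^2 := by exact_mod_cast this.le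
          push_cast at h2; linarith
        calc Real.sqrt X ≤ Real.sqrt (((s:ℝ)+1)^2) := Real.sqrt_le_sqrt h1
          _ = (s:ℝ)+1 := Real.sqrt_sq (by positivity)
      have hrz16 : (16:ℝ) ≤ Real.sqrt X := sqrt_ge_16 hX256
      have hwge : Real.sqrt X / 2 ≤ (w:ℝ) := by
        have : (s:ℝ) ≤ (w:ℝ) := by exact_mod_cast hws
        linarith
      have hcube : (X:ℝ) ≤ (w:ℝ)^3 := by
        have h1 : (Real.sqrt X / 2)^3 ≤ (w:ℝ)^3 := pow_le_pow_left₀ (by positivity) hwge 3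
        have h2 : Real.sqrt X * Real.sqrt X = X := Real.mul_self_sqrt (by positivity)
        nlinarith
      calc Real.log X ≤ Real.log ((w:ℝ)^3) := Real.log_le_log (by linarith) hcube
        _ = 3 * Real.log w := by rw [Real.log_pow]; push_cast; ring
    have hIHw := hIH w hwY
    have hllww : Real.log (Real.log w) ≤ Real.log (Real.log X) := by
      apply Real.log_le_log (by linarith)
      apply Real.log_le_log (by linarith)
      exact_mod_cast hwz
    have hNCw : (0:ℝ) ≤ (NC ℓ w : ℝ) := by positivity
    have hcastdiv : (w:ℝ) ≤ (X:ℝ)/((2^b:ℕ):ℝ) := Nat.cast_div_le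
    have hpow : (Real.log (Real.log w))^ℓ ≤ (Real.log (Real.log X))^ℓ :=
      pow_le_pow_left₀ (by linarith [loglog_ge_one hwr]) hllww ℓ
    have hp2 : ((2^b:ℕ):ℝ) = 2^b := by push_cast; ring
    calc (NC ℓ w : ℝ) * Real.log X ≤ (NC ℓ w : ℝ) * (3 * Real.log w) :=
          mul_le_mul_of_nonneg_left hlog3 hNCw
      _ = 3 * ((NC ℓ w : ℝ) * Real.log w) := by ring
      _ ≤ 3 * (C * w * (Real.log (Real.log w))^ℓ) :=
          mul_le_mul_of_nonneg_left hIHw (by norm_num)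
      _ ≤ 3 * (C * w * (Real.log (Real.log X))^ℓ) := by
          apply mul_le_mul_of_nonneg_left _ (by norm_num)
          apply mul_le_mul_of_nonneg_left hpow (by positivity)
      _ ≤ 3 * (C * ((X:ℝ)/(2:ℝ)^b) * (Real.log (Real.log X))^ℓ) := by
          apply mul_le_mul_of_nonneg_left _ (by norm_num)
          apply mul_le_mul_of_nonneg_right _ (by positivity)
          apply mul_le_mul_of_nonneg_left _ hC.le
          rw [← hp2]; exact hcastdiv
      _ = (3 * C * X * (Real.log (Real.log X))^ℓ) * ((1:ℝ)/2)^b := by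
          rw [div_pow, one_pow]; ring
  have hbig : ∀ b ∈ (Finset.range (L+1)).filter (fun b => ¬ 2^b ≤ s),
      (NC ℓ (X/2^b) : ℝ) * Real.log X ≤ ((s:ℝ)+1) * Real.log X := by
    intro b hb
    rw [Finset.mem_filter] at hb
    have hgs : s + 1 ≤ 2^b := by omega
    have hw1 : X / 2^b ≤ X / (s+1) := Nat.div_le_div_left hgs (by omega)
    have hw2 : X / (s+1) ≤ s := by
      have := (Nat.div_lt_iff_lt_mul (by omega : 0 < s+1)).mpr (Nat.lt_succ_sqrt X)
      omega
    have hNC : NC ℓ (X/2^b) ≤ s + 1 := by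
      calc NC ℓ (X/2^b) ≤ (Finset.range (X/2^b + 1)).card := Finset.card_filter_le _ _
        _ = X/2^b + 1 := Finset.card_range _
        _ ≤ s + 1 := by omega
    apply mul_le_mul_of_nonneg_right _ (by linarith : (0:ℝ) ≤ Real.log X)
    exact_mod_cast hNC
  -- combine
  have hcard := M_card ℓ X (by omega)
  have hcardR : (((Finset.range (X+1)).filter (· ∈ totVl ℓ)).card : ℝ)
      ≤ ∑ b ∈ Finset.range (L+1), (NC ℓ (X/2^b) : ℝ) := by
    exact_mod_cast hcard
  have hlX0 : (0:ℝ) ≤ Real.log X := by linarith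
  have hsplit : ∑ b ∈ Finset.range (L+1), ((NC ℓ (X/2^b) : ℝ) * Real.log X)
      = ∑ b ∈ (Finset.range (L+1)).filter (fun b => 2^b ≤ s),
          ((NC ℓ (X/2^b) : ℝ) * Real.log X)
      + ∑ b ∈ (Finset.range (L+1)).filter (fun b => ¬ 2^b ≤ s),
          ((NC ℓ (X/2^b) : ℝ) * Real.log X) :=
    (Finset.sum_filter_add_sum_filter_not _ _ _).symm
  -- small part total
  have hsmallsum : ∑ b ∈ (Finset.range (L+1)).filter (fun b => 2^b ≤ s),
      ((NC ℓ (X/2^b) : ℝ) * Real.log X) ≤ 6 * C * X * (Real.log (Real.log X))^ℓ := by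
    calc ∑ b ∈ (Finset.range (L+1)).filter (fun b => 2^b ≤ s),
          ((NC ℓ (X/2^b) : ℝ) * Real.log X)
        ≤ ∑ b ∈ (Finset.range (L+1)).filter (fun b => 2^b ≤ s),
            (3 * C * X * (Real.log (Real.log X))^ℓ) * ((1:ℝ)/2)^b :=
          Finset.sum_le_sum hsmall
      _ ≤ ∑ b ∈ Finset.range (L+1), (3 * C * X * (Real.log (Real.log X))^ℓ) * ((1:ℝ)/2)^b := by
          apply Finset.sum_le_sum_of_subset_of_nonneg (Finset.filter_subset _ _)
          intro i _ _; positivity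
      _ = (3 * C * X * (Real.log (Real.log X))^ℓ) * ∑ b ∈ Finset.range (L+1), ((1:ℝ)/2)^b := by
          rw [← Finset.mul_sum]
      _ ≤ (3 * C * X * (Real.log (Real.log X))^ℓ) * 2 := by
          apply mul_le_mul_of_nonneg_left (geo2 _) (by positivity)
      _ = 6 * C * X * (Real.log (Real.log X))^ℓ := by ring
  -- big part total
  have hbigsum : ∑ b ∈ (Finset.range (L+1)).filter (fun b => ¬ 2^b ≤ s),
      ((NC ℓ (X/2^b) : ℝ) * Real.log X) ≤ 96 * X := by
    have hcardf : (((Finset.range (L+1)).filter (fun b => ¬ 2^b ≤ s)).card : ℝ) ≤ (L:ℝ) + 1 := by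
      have := Finset.card_filter_le (Finset.range (L+1)) (fun b => ¬ 2^b ≤ s)
      rw [Finset.card_range] at this
      exact_mod_cast this
    have hsum1 : ∑ b ∈ (Finset.range (L+1)).filter (fun b => ¬ 2^b ≤ s),
        ((NC ℓ (X/2^b) : ℝ) * Real.log X)
        ≤ (((Finset.range (L+1)).filter (fun b => ¬ 2^b ≤ s)).card : ℝ)
          * (((s:ℝ)+1) * Real.log X) := by
      calc ∑ b ∈ (Finset.range (L+1)).filter (fun b => ¬ 2^b ≤ s),
          ((NC ℓ (X/2^b) : ℝ) * Real.log X)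
          ≤ ∑ _b ∈ (Finset.range (L+1)).filter (fun b => ¬ 2^b ≤ s),
            (((s:ℝ)+1) * Real.log X) := Finset.sum_le_sum hbig
        _ = _ := by rw [Finset.sum_const, nsmul_eq_mul]
    have hL3 : (L:ℝ) + 1 ≤ 3 * Real.log X := by
      have := natlog2_le (show 1 ≤ X by omega)
      rw [← hL] at this
      linarith
    have hs2 : (s:ℝ) + 1 ≤ 2 * Real.sqrt X := by
      have h1 := natsqrt_le X
      have h2 := sqrt_ge_16 hX256
      rw [← hs] at h1
      linarith
    have hlsq : (Real.log X)^2 ≤ 16 * Real.sqrt X := logsq_le (by linarith)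
    have hsq0 : (0:ℝ) ≤ Real.sqrt X := Real.sqrt_nonneg _
    have hfin : ((L:ℝ)+1) * (((s:ℝ)+1) * Real.log X) ≤ 96 * X := by
      calc ((L:ℝ)+1) * (((s:ℝ)+1) * Real.log X)
          ≤ (3 * Real.log X) * ((2 * Real.sqrt X) * Real.log X) := by
            apply mul_le_mul hL3 _ (by positivity) (by positivity)
            apply mul_le_mul_of_nonneg_right hs2 (by linarith)
        _ = 6 * Real.sqrt X * (Real.log X)^2 := by ring
        _ ≤ 6 * Real.sqrt X * (16 * Real.sqrt X) := by
            apply mul_le_mul_of_nonneg_left hlsq (by positivity)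
        _ = 96 * (Real.sqrt X * Real.sqrt X) := by ring
        _ = 96 * X := by rw [Real.mul_self_sqrt (by positivity)]
    calc ∑ b ∈ (Finset.range (L+1)).filter (fun b => ¬ 2^b ≤ s),
        ((NC ℓ (X/2^b) : ℝ) * Real.log X)
        ≤ (((Finset.range (L+1)).filter (fun b => ¬ 2^b ≤ s)).card : ℝ)
          * (((s:ℝ)+1) * Real.log X) := hsum1
      _ ≤ ((L:ℝ)+1) * (((s:ℝ)+1) * Real.log X) := by
          apply mul_le_mul_of_nonneg_right hcardf (by positivity)
      _ ≤ 96 * X := hfin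
  calc (((Finset.range (X+1)).filter (· ∈ totVl ℓ)).card : ℝ) * Real.log X
      ≤ (∑ b ∈ Finset.range (L+1), (NC ℓ (X/2^b) : ℝ)) * Real.log X :=
        mul_le_mul_of_nonneg_right hcardR hlX0
    _ = ∑ b ∈ Finset.range (L+1), ((NC ℓ (X/2^b) : ℝ) * Real.log X) := Finset.sum_mul _ _ _
    _ ≤ 6 * C * X * (Real.log (Real.log X))^ℓ + 96 * X := by
        rw [hsplit]; exact add_le_add hsmallsum hbigsum
    _ ≤ (6*C + 96) * X * (Real.log (Real.log X))^ℓ := by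
        have h1 : (96:ℝ) * X ≤ 96 * X * (Real.log (Real.log X))^ℓ := by
          have : (1:ℝ) ≤ (Real.log (Real.log X))^ℓ := one_le_pow₀ hllX
          nlinarith [Nat.cast_nonneg (α := ℝ) X]
        linarith

theorem stmt_11_aux (ℓ : ℕ) (hℓ : 1 ≤ ℓ) :
    ∃ C : ℝ, 0 < C ∧ ∀ᶠ x : ℝ in atTop,
      (countUpTo (totVl ℓ) x : ℝ) ≤ C * (x / Real.log x) * (Real.log (Real.log x)) ^ ℓ := by
  obtain ⟨C, hC, Z, hZ256, h⟩ := main_count ℓ hℓ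
  refine ⟨2*C, by positivity, ?_⟩
  filter_upwards [eventually_ge_atTop ((Z:ℝ) + 1), eventually_ge_atTop (65536:ℝ)]
    with x hx1 hx2
  set X := ⌊x⌋₊ with hX
  have hxpos : (0:ℝ) < x := by linarith
  have hXZ : Z ≤ X := Nat.le_floor (by linarith)
  have hXx : (X:ℝ) ≤ x := Nat.floor_le hxpos.le
  have hX256 : 256 ≤ X := by omega
  have hX256r : (256:ℝ) ≤ (X:ℝ) := by exact_mod_cast hX256
  have hxr256 : (256:ℝ) ≤ x := by linarith
  have hcount : countUpTo (totVl ℓ) x ≤ ((Finset.range (X+1)).filter (· ∈ totVl ℓ)).card := by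
    rw [countUpTo]
    have hsub : {n | n ∈ totVl ℓ ∧ (n:ℝ) ≤ x}
        ⊆ ↑((Finset.range (X+1)).filter (· ∈ totVl ℓ)) := by
      intro n hn
      simp only [Finset.coe_filter, Set.mem_setOf_eq, Finset.mem_range]
      exact ⟨Nat.lt_succ_of_le (Nat.le_floor hn.2), hn.1⟩
    calc Set.ncard {n | n ∈ totVl ℓ ∧ (n:ℝ) ≤ x}
        ≤ Set.ncard (↑((Finset.range (X+1)).filter (· ∈ totVl ℓ)) : Set ℕ) :=
          Set.ncard_le_ncard hsub (Finset.finite_toSet _)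
      _ = ((Finset.range (X+1)).filter (· ∈ totVl ℓ)).card := Set.ncard_coe_finset _
  have hmain := h X hXZ
  have hlogX3 : 3 ≤ Real.log X := log_ge_three hX256r
  have hlogx3 : 3 ≤ Real.log x := log_ge_three hxr256
  have hlx2 : Real.log x ≤ 2 * Real.log X := by
    have hfl : x - 1 < (X:ℝ) := Nat.sub_one_lt_floor x
    have hx1X : x ≤ (X:ℝ)^2 := by nlinarith
    calc Real.log x ≤ Real.log ((X:ℝ)^2) := Real.log_le_log hxpos hx1X
      _ = 2 * Real.log X := by rw [Real.log_pow]; push_cast; ring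
  have hllXx : Real.log (Real.log X) ≤ Real.log (Real.log x) := by
    apply Real.log_le_log (by linarith)
    exact Real.log_le_log (by linarith) hXx
  have hllX1 : 1 ≤ Real.log (Real.log X) := loglog_ge_one hX256r
  have hllx1 : 1 ≤ Real.log (Real.log x) := loglog_ge_one hxr256
  have hlogx_pos : (0:ℝ) < Real.log x := by linarith
  have hcR : (countUpTo (totVl ℓ) x : ℝ)
      ≤ (((Finset.range (X+1)).filter (· ∈ totVl ℓ)).card : ℝ) := by exact_mod_cast hcount
  have hpowll : (Real.log (Real.log X))^ℓ ≤ (Real.log (Real.log x))^ℓ :=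
    pow_le_pow_left₀ (by linarith) hllXx ℓ
  have key : (countUpTo (totVl ℓ) x : ℝ) * Real.log x
      ≤ 2*C*x*(Real.log (Real.log x))^ℓ := by
    calc (countUpTo (totVl ℓ) x : ℝ) * Real.log x
        ≤ (countUpTo (totVl ℓ) x : ℝ) * (2 * Real.log X) :=
          mul_le_mul_of_nonneg_left hlx2 (by positivity)
      _ = 2 * ((countUpTo (totVl ℓ) x : ℝ) * Real.log X) := by ring
      _ ≤ 2 * ((((Finset.range (X+1)).filter (· ∈ totVl ℓ)).card : ℝ) * Real.log X) := by
          apply mul_le_mul_of_nonneg_left _ (by norm_num)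
          exact mul_le_mul_of_nonneg_right hcR (by linarith)
      _ ≤ 2 * (C * X * (Real.log (Real.log X))^ℓ) :=
          mul_le_mul_of_nonneg_left hmain (by norm_num)
      _ ≤ 2 * (C * x * (Real.log (Real.log x))^ℓ) := by
          apply mul_le_mul_of_nonneg_left _ (by norm_num)
          apply mul_le_mul (mul_le_mul_of_nonneg_left hXx hC.le) hpowll (by positivity)
            (by positivity)
      _ = 2*C*x*(Real.log (Real.log x))^ℓ := by ring
  have h2 : (countUpTo (totVl ℓ) x : ℝ)
      ≤ (2*C*x*(Real.log (Real.log x))^ℓ)/Real.log x := (le_div_iff₀ hlogx_pos).mpr key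
  calc (countUpTo (totVl ℓ) x : ℝ)
      ≤ (2*C*x*(Real.log (Real.log x))^ℓ)/Real.log x := h2
    _ = 2*C * (x / Real.log x) * (Real.log (Real.log x))^ℓ := by ring

end StmtAux

/-- For each `ℓ ≥ 1` there is `C_ℓ > 0` with
`V^ℓ(x) ≤ C_ℓ·(x/log x)·(log log x)^ℓ` for all sufficiently large `x`. -/
theorem stmt_11 (ℓ : ℕ) (hℓ : 1 ≤ ℓ) :
    ∃ C : ℝ, 0 < C ∧ ∀ᶠ x : ℝ in atTop,
      (countUpTo (totVl ℓ) x : ℝ) ≤ C * (x / Real.log x) * (Real.log (Real.log x)) ^ ℓ := by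
  exact stmt_11_aux ℓ hℓ
end
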